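/- arXiv:1806.01889 — 7 statements merged into one kernel-verified Lean document; each statement's English description precedes it below -/
import Mathlib

section
/- Let F and E be locally convex Hausdorff spaces, (fₙ) an equicontinuous Schauder basis of F with coefficient functionals (λₙ), Qₙ(f) = λₙ(f)fₙ, and P_k = (Σ_{n=1}^{k} Qₙ) ε id_E the induced operators on the ε-product F ε E = L_e(F'_κ, E). Then for every u ∈ F ε E, the sequence (P_k(u)) converges to u in F ε E; consequently every u ∈ F ε E satisfies u(f') = Σ_{n=1}^{∞} u(λₙ) f'(fₙ) for all f' ∈ F'. -/
open Filter Topology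
open scoped Uniformity

/-- The convex join of two compact sets is compact. -/
lemma isCompact_convexJoin {G : Type*} [AddCommGroup G] [Module ℝ G] [TopologicalSpace G]
    [ContinuousAdd G] [ContinuousSMul ℝ G] {s t : Set G}
    (hs : IsCompact s) (ht : IsCompact t) : IsCompact (convexJoin ℝ s t) := by
  have heq : convexJoin ℝ s t =
      (fun p : ℝ × G × G => (1 - p.1) • p.2.1 + p.1 • p.2.2) ''
        (Set.Icc (0:ℝ) 1 ×ˢ s ×ˢ t) := by
    ext z
    simp only [mem_convexJoin, Set.mem_image, Set.mem_prod]
    constructor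
    · rintro ⟨x, hx, y, hy, hz⟩
      rw [segment_eq_image ℝ x y] at hz
      obtain ⟨θ, hθ, hθz⟩ := hz
      exact ⟨(θ, x, y), ⟨hθ, hx, hy⟩, hθz⟩
    · rintro ⟨⟨θ, x, y⟩, ⟨hθ, hx, hy⟩, hz⟩
      refine ⟨x, hx, y, hy, ?_⟩
      rw [segment_eq_image ℝ x y]
      exact ⟨θ, hθ, hz⟩
  rw [heq]
  exact (isCompact_Icc.prod (hs.prod ht)).image <| by fun_prop

/-- The collection of absolutely convex compact subsets of `F`. -/
def kappaSets (𝕜 F : Type*) [RCLike 𝕜] [AddCommGroup F] [Module 𝕜 F] [Module ℝ F]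
    [UniformSpace F] : Set (Set F) :=
  {s : Set F | IsCompact s ∧ Balanced 𝕜 s ∧ Convex ℝ s}

/-- `F'_κ`: the dual of `F` with the topology of uniform convergence on absolutely convex
compact subsets of `F`. -/
abbrev DualKappa (𝕜 F : Type*) [RCLike 𝕜] [AddCommGroup F] [Module 𝕜 F] [Module ℝ F]
    [UniformSpace F] [IsUniformAddGroup F] [ContinuousSMul 𝕜 F] :=
  UniformConvergenceCLM (RingHom.id 𝕜) 𝕜 (kappaSets 𝕜 F)

/-- Let `(fₙ)` be an equicontinuous Schauder basis of `F` with coefficient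
functionals `(λₙ)`, and `P_k = (Σ_{n<k} Qₙ) ε id_E` on the ε-product `F ε E = L(F'_κ, E)`,
so that `P_k(u)(f') = Σ_{n<k} f'(fₙ) • u(λₙ)`.  Then `P_k(u) → u` in `F ε E`, i.e. uniformly
on every equicontinuous subset of `F'`; consequently `u(f') = Σₙ f'(fₙ) • u(λₙ)` for every
`f' ∈ F'`. -/
theorem stmt2 {𝕜 F E : Type*} [RCLike 𝕜]
    [AddCommGroup F] [Module 𝕜 F] [UniformSpace F] [IsUniformAddGroup F]
    [ContinuousSMul 𝕜 F] [T2Space F] [Module ℝ F] [IsScalarTower ℝ 𝕜 F]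
    [LocallyConvexSpace ℝ F]
    [AddCommGroup E] [Module 𝕜 E] [UniformSpace E] [IsUniformAddGroup E]
    [ContinuousSMul 𝕜 E] [T2Space E] [Module ℝ E] [IsScalarTower ℝ 𝕜 E]
    [LocallyConvexSpace ℝ E]
    (f : ℕ → F) (lam : ℕ → F →L[𝕜] 𝕜)
    -- `(fₙ)` is a Schauder basis with coefficient functionals `(λₙ)`:
    (hrepr : ∀ x : F,
      Tendsto (fun k => ∑ n ∈ Finset.range k, lam n x • f n) atTop (𝓝 x))
    (huniq : ∀ (x : F) (c : ℕ → 𝕜),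
      Tendsto (fun k => ∑ n ∈ Finset.range k, c n • f n) atTop (𝓝 x) →
        c = fun n => lam n x)
    -- the basis is equicontinuous (the expansion operators form an equicontinuous family):
    (hequi : Equicontinuous
      (fun k : ℕ => fun x : F => ∑ n ∈ Finset.range k, lam n x • f n))
    -- `u ∈ F ε E = L(F'_κ, E)`:
    (u : DualKappa 𝕜 F →L[𝕜] E) :
    (∀ S : Set (F →L[𝕜] 𝕜), Equicontinuous (fun φ : S => (φ.1 : F → 𝕜)) →
      TendstoUniformlyOn
        (fun k (f' : F →L[𝕜] 𝕜) => ∑ n ∈ Finset.range k, f' (f n) • u (lam n))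
        (fun f' : F →L[𝕜] 𝕜 => u f') atTop S) ∧
    (∀ f' : F →L[𝕜] 𝕜,
      Tendsto (fun k => ∑ n ∈ Finset.range k, f' (f n) • u (lam n)) atTop (𝓝 (u f'))) := by
  classical
  have hsmulF : ContinuousSMul ℝ F := IsScalarTower.continuousSMul 𝕜
  -- `kappaSets` is nonempty and directed
  have hne : (kappaSets 𝕜 F).Nonempty :=
    ⟨∅, isCompact_empty, balanced_empty, convex_empty⟩
  have hdir : DirectedOn (· ⊆ ·) (kappaSets 𝕜 F) := by
    rintro K₁ ⟨hK₁c, hK₁b, hK₁v⟩ K₂ ⟨hK₂c, hK₂b, hK₂v⟩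
    have hbal : Balanced 𝕜 (convexHull ℝ (K₁ ∪ K₂)) := by
      have hs := hK₁b.union hK₂b
      suffices Convex ℝ { x | ∀ a : 𝕜, ‖a‖ ≤ 1 → a • x ∈ convexHull ℝ (K₁ ∪ K₂) } by
        rw [balanced_iff_smul_mem] at hs ⊢
        refine fun a ha x hx => convexHull_min ?_ this hx a ha
        exact fun y hy a ha => subset_convexHull ℝ _ (hs ha hy)
      intro x hx y hy u v hu hv huv a ha
      rw [smul_add, ← smul_comm u, ← smul_comm v]
      exact convex_convexHull ℝ _ (hx a ha) (hy a ha) hu hv huv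
    refine ⟨convexHull ℝ (K₁ ∪ K₂), ⟨?_, hbal, convex_convexHull ℝ _⟩,
      Set.subset_union_left.trans (subset_convexHull ℝ _),
      Set.subset_union_right.trans (subset_convexHull ℝ _)⟩
    rcases K₁.eq_empty_or_nonempty with rfl | h₁
    · rw [Set.empty_union, hK₂v.convexHull_eq]; exact hK₂c
    rcases K₂.eq_empty_or_nonempty with rfl | h₂
    · rw [Set.union_empty, hK₁v.convexHull_eq]; exact hK₁c
    rw [convexHull_union h₁ h₂, hK₁v.convexHull_eq, hK₂v.convexHull_eq]
    exact isCompact_convexJoin hK₁c hK₂c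
  -- the expansion operators as continuous linear maps
  set T : ℕ → F →L[𝕜] F := fun k => ∑ n ∈ Finset.range k, (lam n).smulRight (f n) with hT
  have hTapp : ∀ k x, T k x = ∑ n ∈ Finset.range k, lam n x • f n := by
    intro k x
    simp [hT, ContinuousLinearMap.sum_apply]
  have hequi' : Equicontinuous (fun k => ⇑(T k)) := by
    have : (fun k => ⇑(T k)) = (fun k : ℕ => fun x : F =>
        ∑ n ∈ Finset.range k, lam n x • f n) := by
      funext k x; exact hTapp k x
    rw [this]; exact hequi
  -- uniform convergence of `T k → id` on compact sets
  have hunifK : ∀ K : Set F, IsCompact K → ∀ U ∈ 𝓝 (0 : F),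
      ∀ᶠ k in atTop, ∀ x ∈ K, T k x - x ∈ U := by
    intro K hK U hU
    haveI : CompactSpace K := isCompact_iff_compactSpace.mp hK
    set G : ℕ → K → F := fun k x => T k x.1 with hG
    have hGequi : Equicontinuous G := by
      intro x₀ U' hU'
      exact (continuous_subtype_val.continuousAt (x := x₀)).eventually
        (hequi' x₀.1 U' hU')
    have hGpt : Tendsto G atTop (𝓝 (fun x : K => (x.1 : F))) := by
      rw [tendsto_pi_nhds]
      intro x
      have := hrepr x.1
      have heq : (fun k => G k x) = fun k => ∑ n ∈ Finset.range k, lam n x.1 • f n := by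
        funext k; exact hTapp k x.1
      rw [heq]; exact this
    have htu : TendstoUniformly G (fun x : K => (x.1 : F)) atTop := by
      have h1 : Tendsto (UniformFun.ofFun ∘ G) atTop
          (𝓝 (UniformFun.ofFun (fun x : K => (x.1 : F)))) :=
        (hGequi.tendsto_uniformFun_iff_pi atTop _).mpr hGpt
      rwa [UniformFun.tendsto_iff_tendstoUniformly] at h1
    have hV : {p : F × F | p.2 - p.1 ∈ U} ∈ 𝓤 F := by
      rw [uniformity_eq_comap_nhds_zero F]; exact Filter.preimage_mem_comap hU
    filter_upwards [htu _ hV] with k hk x hx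
    exact hk ⟨x, hx⟩
  -- the basic convergence estimate in `DualKappa`
  have key : ∀ (S : Set (F →L[𝕜] 𝕜)), Equicontinuous (fun φ : S => (φ.1 : F → 𝕜)) →
      ∀ N ∈ 𝓝 (0 : DualKappa 𝕜 F), ∀ᶠ k in atTop, ∀ φ ∈ S,
        (((φ.comp (T k) - φ : F →L[𝕜] 𝕜)) : DualKappa 𝕜 F) ∈ N := by
    intro S hS N hN
    obtain ⟨⟨K, W⟩, ⟨hK, hW⟩, hKWN⟩ :=
      (UniformConvergenceCLM.hasBasis_nhds_zero (RingHom.id 𝕜) 𝕜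
        (kappaSets 𝕜 F) hne hdir).mem_iff.mp hN
    have hW' : {p : 𝕜 × 𝕜 | p.2 - p.1 ∈ W} ∈ 𝓤 𝕜 := by
      rw [uniformity_eq_comap_nhds_zero 𝕜]; exact Filter.preimage_mem_comap hW
    have hV : ∀ᶠ y in 𝓝 (0 : F), ∀ φ : S, (φ.1 0, φ.1 y) ∈ {p : 𝕜 × 𝕜 | p.2 - p.1 ∈ W} :=
      hS 0 _ hW'
    filter_upwards [hunifK K hK.1 _ hV] with k hk φ hφ
    apply hKWN
    intro x hx
    have h1 := hk x hx
    have h2 := h1 ⟨φ, hφ⟩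
    simp only [map_zero, Set.mem_setOf_eq, sub_zero] at h2
    have h3 : ((φ.comp (T k) - φ : F →L[𝕜] 𝕜)) x = φ (T k x - x) := by
      simp [ContinuousLinearMap.sub_apply, map_sub]
    show ((φ.comp (T k) - φ : F →L[𝕜] 𝕜)) x ∈ W
    rw [h3]
    exact h2
  -- the algebraic identity
  have hid : ∀ (φ : F →L[𝕜] 𝕜) (k : ℕ),
      (∑ n ∈ Finset.range k, φ (f n) • u (lam n)) = u (φ.comp (T k)) := by
    intro φ k
    have h3 : φ.comp (T k) = ∑ n ∈ Finset.range k, φ (f n) • lam n := by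
      ext x
      simp [hT, ContinuousLinearMap.sum_apply, mul_comm]
    rw [h3]
    erw [map_sum]
    refine Finset.sum_congr rfl fun n _ => ?_
    erw [map_smul]
  -- main statement
  have main : ∀ S : Set (F →L[𝕜] 𝕜), Equicontinuous (fun φ : S => (φ.1 : F → 𝕜)) →
      TendstoUniformlyOn
        (fun k (f' : F →L[𝕜] 𝕜) => ∑ n ∈ Finset.range k, f' (f n) • u (lam n))
        (fun f' : F →L[𝕜] 𝕜 => u f') atTop S := by
    intro S hS V hV
    rw [uniformity_eq_comap_nhds_zero E] at hV
    obtain ⟨W, hW, hWV⟩ := hV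
    have hNu : u ⁻¹' W ∈ 𝓝 (0 : DualKappa 𝕜 F) := by
      have hc : ContinuousAt u (0 : DualKappa 𝕜 F) := u.continuous.continuousAt
      rw [ContinuousAt, map_zero] at hc
      exact hc hW
    filter_upwards [key S hS _ hNu] with k hk φ hφ
    apply hWV
    have h1 : u ((φ.comp (T k) - φ : F →L[𝕜] 𝕜)) ∈ W := hk φ hφ
    erw [map_sub] at h1
    show (∑ n ∈ Finset.range k, φ (f n) • u (lam n)) - u φ ∈ W
    rw [hid φ k]
    exact h1
  refine ⟨main, ?_⟩
  intro f'
  have hsing : Equicontinuous (fun φ : ({f'} : Set (F →L[𝕜] 𝕜)) => (φ.1 : F → 𝕜)) := by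
    intro x₀ U hU
    have hc : Tendsto (⇑f') (𝓝 x₀) (𝓝 (f' x₀)) := f'.continuous.tendsto x₀
    have h' : {z : 𝕜 | (f' x₀, z) ∈ U} ∈ 𝓝 (f' x₀) := by
      rw [nhds_eq_comap_uniformity]
      exact Filter.preimage_mem_comap hU
    have hmem : {y : F | (f' x₀, f' y) ∈ U} ∈ 𝓝 x₀ := Filter.mem_map.mp (hc h')
    filter_upwards [hmem] with y hy φ
    have : φ.1 = f' := φ.2
    rw [this]
    exact hy
  exact (main {f'} hsing).tendsto_at rfl
end

section
/- Let F and E be locally convex Hausdorff spaces and (fₙ) an equicontinuous Schauder basis of F with coefficient functionals (λₙ). Then the tensor product F ⊗ E, viewed as the finite-rank operators inside the ε-product F ε E, is sequentially dense in F ε E. -/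
open Filter Topology
open scoped Uniformity

section aux
open Set Pointwise
variable {𝕜 F : Type*} [RCLike 𝕜] [AddCommGroup F] [Module 𝕜 F] [Module ℝ F]
  [UniformSpace F] [IsUniformAddGroup F] [ContinuousSMul 𝕜 F] [IsScalarTower ℝ 𝕜 F]

theorem kappaSets_cover : ⋃₀ kappaSets 𝕜 F = Set.univ := by
  apply Set.eq_univ_of_forall
  intro x
  refine ⟨(fun a : 𝕜 => a • x) '' Metric.closedBall 0 1, ⟨?_, ?_, ?_⟩, ?_⟩
  · exact (isCompact_closedBall _ _).image (continuous_id.smul continuous_const)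
  · rintro a ha y ⟨z, ⟨c, hc, rfl⟩, rfl⟩
    refine ⟨a * c, ?_, by simp [mul_smul]⟩
    simpa using mul_le_one₀ ha (norm_nonneg _) (by simpa using hc)
  · refine (convex_closedBall (0:𝕜) 1).is_linear_image ?_
    exact ⟨fun a b => add_smul a b x, fun t a => smul_assoc t a x⟩
  · exact ⟨1, by simp, one_smul 𝕜 x⟩

theorem kappaSets_nonempty : (kappaSets 𝕜 F).Nonempty :=
  ⟨∅, isCompact_empty, balanced_empty, convex_empty⟩

theorem kappaSets_directed : DirectedOn (· ⊆ ·) (kappaSets 𝕜 F) := by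
  rintro K₁ ⟨h₁c, h₁b, h₁v⟩ K₂ ⟨h₂c, h₂b, h₂v⟩
  rcases K₁.eq_empty_or_nonempty with rfl | hne₁
  · exact ⟨K₂, ⟨h₂c, h₂b, h₂v⟩, empty_subset _, subset_rfl⟩
  rcases K₂.eq_empty_or_nonempty with rfl | hne₂
  · exact ⟨K₁, ⟨h₁c, h₁b, h₁v⟩, subset_rfl, empty_subset _⟩
  have h01 : (0:F) ∈ K₁ := by
    obtain ⟨y, hy⟩ := hne₁
    simpa using h₁b 0 (by simp) (Set.smul_mem_smul_set hy)
  have h02 : (0:F) ∈ K₂ := by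
    obtain ⟨y, hy⟩ := hne₂
    simpa using h₂b 0 (by simp) (Set.smul_mem_smul_set hy)
  refine ⟨K₁ + K₂, ⟨h₁c.add h₂c, h₁b.add h₂b, h₁v.add h₂v⟩, ?_, ?_⟩
  · intro x hx; exact ⟨x, hx, 0, h02, (add_zero x)⟩
  · intro x hx; exact ⟨0, h01, x, hx, (zero_add x)⟩

end aux

/-- If `F` has an equicontinuous Schauder basis `(fₙ)` with coefficient
functionals `(λₙ)`, then the finite-rank operators (i.e. `F ⊗ E`) are sequentially dense in
the ε-product `F ε E = L(F'_κ, E)`: every `u ∈ F ε E` is the limit of a sequence of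
finite-rank elements, convergence being uniform on every equicontinuous subset of `F'`. -/
theorem stmt3 {𝕜 F E : Type*} [RCLike 𝕜]
    [AddCommGroup F] [Module 𝕜 F] [UniformSpace F] [IsUniformAddGroup F]
    [ContinuousSMul 𝕜 F] [T2Space F] [Module ℝ F] [IsScalarTower ℝ 𝕜 F]
    [LocallyConvexSpace ℝ F]
    [AddCommGroup E] [Module 𝕜 E] [UniformSpace E] [IsUniformAddGroup E]
    [ContinuousSMul 𝕜 E] [T2Space E] [Module ℝ E] [IsScalarTower ℝ 𝕜 E]
    [LocallyConvexSpace ℝ E]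
    (f : ℕ → F) (lam : ℕ → F →L[𝕜] 𝕜)
    (hrepr : ∀ x : F,
      Tendsto (fun k => ∑ n ∈ Finset.range k, lam n x • f n) atTop (𝓝 x))
    (huniq : ∀ (x : F) (c : ℕ → 𝕜),
      Tendsto (fun k => ∑ n ∈ Finset.range k, c n • f n) atTop (𝓝 x) →
        c = fun n => lam n x)
    (hequi : Equicontinuous
      (fun k : ℕ => fun x : F => ∑ n ∈ Finset.range k, lam n x • f n)) :
    ∀ u : DualKappa 𝕜 F →L[𝕜] E, ∃ v : ℕ → (DualKappa 𝕜 F →L[𝕜] E),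
      -- each `v k` has finite rank, i.e. belongs to `F ⊗ E`:
      (∀ k, ∃ (m : ℕ) (g : Fin m → F) (e : Fin m → E),
        ∀ f' : F →L[𝕜] 𝕜, v k f' = ∑ i, f' (g i) • e i) ∧
      -- and `v k → u` in `F ε E`:
      (∀ S : Set (F →L[𝕜] 𝕜), Equicontinuous (fun φ : S => (φ.1 : F → 𝕜)) →
        TendstoUniformlyOn (fun k (f' : F →L[𝕜] 𝕜) => v k f')
          (fun f' : F →L[𝕜] 𝕜 => u f') atTop S) := by
  intro u
  haveI : ContinuousEvalConst (DualKappa 𝕜 F) F 𝕜 :=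
    UniformConvergenceCLM.continuousEvalConst _ _ _ kappaSets_cover
  -- the partial sum operators
  set P : ℕ → F →L[𝕜] F :=
    fun k => ∑ n ∈ Finset.range k, (lam n).smulRight (f n) with hP
  have hPapply : ∀ k x, P k x = ∑ n ∈ Finset.range k, lam n x • f n := by
    intro k x
    simp [hP, ContinuousLinearMap.sum_apply]
  -- the finite rank approximants
  have vcont : ∀ k : ℕ, Continuous fun f' : DualKappa 𝕜 F =>
      ∑ n ∈ Finset.range k, f' (f n) • u (lam n) := by
    intro k
    exact continuous_finset_sum _ fun n _ =>
      ((continuous_eval_const (f n)).smul continuous_const)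
  set v : ℕ → (DualKappa 𝕜 F →L[𝕜] E) := fun k =>
    { toFun := fun f' => ∑ n ∈ Finset.range k, f' (f n) • u (lam n)
      map_add' := by
        intro a b
        simp only [show ∀ x : F, (a + b) x = a x + b x from fun _ => rfl, add_smul,
          Finset.sum_add_distrib]
      map_smul' := by
        intro c a
        simp only [show ∀ x : F, (c • a) x = c • a x from fun _ => rfl, smul_assoc,
          RingHom.id_apply]
        rw [Finset.smul_sum]
      cont := vcont k } with hv
  have hvapply : ∀ k (f' : F →L[𝕜] 𝕜),
      v k f' = ∑ n ∈ Finset.range k, f' (f n) • u (lam n) := fun _ _ => rfl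
  refine ⟨v, ?_, ?_⟩
  · intro k
    refine ⟨k, fun i => f i, fun i => u (lam i), fun f' => ?_⟩
    rw [hvapply, Finset.sum_range fun i => f' (f i) • u (lam i)]
  · intro S hS
    intro V hV
    -- reduce the entourage to a neighbourhood of 0 in E
    rw [uniformity_eq_comap_nhds_zero E] at hV
    obtain ⟨N, hN, hNV⟩ := hV
    -- pull back along u
    have hW : (fun f' : DualKappa 𝕜 F => u f') ⁻¹' N ∈ 𝓝 (0 : DualKappa 𝕜 F) := by
      have := u.continuous.tendsto (0 : DualKappa 𝕜 F)
      rw [map_zero] at this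
      exact this hN
    -- basic neighbourhood in the kappa topology
    obtain ⟨⟨K, T⟩, ⟨hK, hT⟩, hKT⟩ :=
      (UniformConvergenceCLM.hasBasis_nhds_zero (RingHom.id 𝕜) 𝕜 (kappaSets 𝕜 F)
        kappaSets_nonempty kappaSets_directed).mem_iff.mp hW
    -- use equicontinuity of S to find a 0-neighbourhood in F controlled into T
    have hU : {p : 𝕜 × 𝕜 | p.2 - p.1 ∈ T} ∈ 𝓤 𝕜 := by
      rw [uniformity_eq_comap_nhds_zero 𝕜]
      exact preimage_mem_comap hT
    have hU₀ : ∀ᶠ y in 𝓝 (0 : F), ∀ φ : S, (φ.1 : F →L[𝕜] 𝕜) y ∈ T := by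
      filter_upwards [hS 0 _ hU] with y hy φ
      have := hy φ
      simpa using this
    obtain ⟨U₀, hU₀mem, hU₀T⟩ := eventually_iff_exists_mem.mp hU₀
    -- uniform convergence of P k to id on the compact set K
    haveI : CompactSpace K := isCompact_iff_compactSpace.mp hK.1
    have heqK : Equicontinuous (fun k => fun x : K => P k (x : F)) := by
      have h1 : EquicontinuousOn (fun k : ℕ => fun x : F =>
          ∑ n ∈ Finset.range k, lam n x • f n) K := hequi.equicontinuousOn _
      have h2 := (equicontinuous_restrict_iff _).mpr h1
      have h3 : (fun k => fun x : K => P k (x : F)) =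
          fun k : ℕ => K.restrict fun x : F => ∑ n ∈ Finset.range k, lam n x • f n := by
        funext k x
        exact hPapply k (x : F)
      rw [h3]
      exact h2
    have hptK : Tendsto (fun k => fun x : K => P k (x : F)) atTop
        (𝓝 fun x : K => (x : F)) := by
      rw [tendsto_pi_nhds]
      intro x
      simpa [hPapply] using hrepr (x : F)
    have huK : Tendsto (UniformFun.ofFun ∘ fun k => fun x : K => P k (x : F)) atTop
        (𝓝 <| UniformFun.ofFun fun x : K => (x : F)) :=
      (heqK.tendsto_uniformFun_iff_pi atTop _).mpr hptK
    have hTU : TendstoUniformly (fun k => fun x : K => P k (x : F))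
        (fun x : K => (x : F)) atTop :=
      UniformFun.tendsto_iff_tendstoUniformly.mp huK
    have hUF : {p : F × F | p.2 - p.1 ∈ U₀} ∈ 𝓤 F := by
      rw [uniformity_eq_comap_nhds_zero F]
      exact preimage_mem_comap hU₀mem
    have hfin : ∀ᶠ k in atTop, ∀ x ∈ K, P k x - x ∈ U₀ := by
      filter_upwards [hTU _ hUF] with k hk x hx
      exact hk ⟨x, hx⟩
    -- combine
    filter_upwards [hfin] with k hk f' hf'
    apply hNV
    show v k f' - u f' ∈ N
    -- v k f' = u (g k f') where g k f' = ∑ f'(f n) • lam n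
    have hgk : v k f' =
        u (∑ n ∈ Finset.range k, f' (f n) • lam n : DualKappa 𝕜 F) := by
      erw [hvapply, map_sum]
      congr 1
      ext n
      erw [map_smul]
    rw [hgk]; erw [← map_sub]
    apply hKT
    intro x hx
    have hdiff : ((∑ n ∈ Finset.range k, f' (f n) • lam n : F →L[𝕜] 𝕜) - f' : DualKappa 𝕜 F) x
        = f' (P k x - x) := by
      simp only [ContinuousLinearMap.sub_apply, ContinuousLinearMap.sum_apply,
        ContinuousLinearMap.smul_apply, map_sub, hPapply, map_sum, map_smul]
      congr 1
      refine Finset.sum_congr rfl fun n _ => ?_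
      simp [smul_eq_mul, mul_comm]
    erw [hdiff]
    exact hU₀T _ (hk x hx) ⟨f', hf'⟩
end

section
/- Let F and E be complete locally convex Hausdorff spaces and suppose F has an equicontinuous Schauder basis. Then the completed injective tensor product F ⊗̂_ε E is (isomorphic to) the ε-product F ε E, and hence every element of F ⊗̂_ε E has a series representation u = Σₙ u(λₙ) ⊗ fₙ in the sense that u(f') = Σₙ u(λₙ) f'(fₙ). -/
open Filter Topology
open scoped Uniformity

/-- Schwartz' ε-product `F ε E = L_e(F'_κ, E)`: continuous linear operators from `F'_κ` to `E`
with the topology of uniform convergence on the equicontinuous subsets of `F'`. -/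
abbrev EpsilonProduct (𝕜 F E : Type*) [RCLike 𝕜]
    [AddCommGroup F] [Module 𝕜 F] [UniformSpace F] [IsUniformAddGroup F]
    [ContinuousSMul 𝕜 F] [Module ℝ F]
    [AddCommGroup E] [Module 𝕜 E] [UniformSpace E] [IsUniformAddGroup E]
    [ContinuousSMul 𝕜 E] :=
  UniformConvergenceCLM (RingHom.id 𝕜) E
    {S : Set (DualKappa 𝕜 F) | Equicontinuous (fun φ : S => (φ.1 : F → 𝕜))}

section Aux

open Set

lemma kappaSets_nonempty_s4 (𝕜 F : Type*) [RCLike 𝕜] [AddCommGroup F] [Module 𝕜 F] [Module ℝ F]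
    [UniformSpace F] : (kappaSets 𝕜 F).Nonempty :=
  ⟨∅, isCompact_empty, balanced_empty, convex_empty⟩

lemma kappaSets_directedOn (𝕜 F : Type*) [RCLike 𝕜] [AddCommGroup F] [Module 𝕜 F] [Module ℝ F]
    [IsScalarTower ℝ 𝕜 F] [UniformSpace F] [IsUniformAddGroup F] [ContinuousSMul 𝕜 F] :
    DirectedOn (· ⊆ ·) (kappaSets 𝕜 F) := by
  haveI : ContinuousSMul ℝ F := by
    refine ⟨?_⟩
    have h : (fun p : ℝ × F => p.1 • p.2) = fun p : ℝ × F => ((p.1 : 𝕜) • p.2) := by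
      funext p; exact RCLike.real_smul_eq_coe_smul p.1 p.2
    rw [h]
    exact continuous_smul.comp
      ((RCLike.continuous_ofReal.comp continuous_fst).prodMk continuous_snd)
  rintro S ⟨hSc, hSb, hSv⟩ T ⟨hTc, hTb, hTv⟩
  rcases S.eq_empty_or_nonempty with rfl | hSne
  · exact ⟨T, ⟨hTc, hTb, hTv⟩, empty_subset T, subset_rfl⟩
  rcases T.eq_empty_or_nonempty with rfl | hTne
  · exact ⟨S, ⟨hSc, hSb, hSv⟩, subset_rfl, empty_subset S⟩
  refine ⟨convexHull ℝ (S ∪ T), ⟨?_, by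
      intro a ha x hx
      obtain ⟨y, hy, rfl⟩ := hx
      refine convexHull_min (s := S ∪ T) (t := {y | a • y ∈ convexHull ℝ (S ∪ T)}) ?_ ?_ hy
      · exact fun z hz => subset_convexHull ℝ _ ((balanced_iff_smul_mem.mp (hSb.union hTb)) ha hz)
      · intro y hy z hz u v hu hv huv
        simp only [Set.mem_setOf_eq, smul_add, smul_comm a u, smul_comm a v]
        exact convex_convexHull ℝ _ hy hz hu hv huv, convex_convexHull ℝ _⟩,
    subset_union_left.trans (subset_convexHull ℝ _),
    subset_union_right.trans (subset_convexHull ℝ _)⟩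
  rw [hSv.convexHull_union hTv hSne hTne]
  have h2 : convexJoin ℝ S T =
      (fun q : ℝ × F × F => q.1 • q.2.1 + (1 - q.1) • q.2.2) '' (Set.Icc (0:ℝ) 1 ×ˢ S ×ˢ T) := by
    ext z
    rw [mem_convexJoin]
    constructor
    · rintro ⟨a, ha, b, hb, p, q, hp, hq, hpq, rfl⟩
      exact ⟨(p, a, b), ⟨⟨hp, by linarith⟩, ha, hb⟩, by
        simp only []; rw [show (1:ℝ) - p = q by linarith]⟩
    · rintro ⟨⟨p, a, b⟩, ⟨⟨hp0, hp1⟩, ha, hb⟩, rfl⟩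
      exact ⟨a, ha, b, hb, p, 1 - p, hp0, by linarith, by ring, rfl⟩
  rw [h2]
  exact (isCompact_Icc.prod (hSc.prod hTc)).image (by fun_prop)

variable {𝕜 F : Type*} [RCLike 𝕜] [AddCommGroup F] [Module 𝕜 F] [Module ℝ F]
    [IsScalarTower ℝ 𝕜 F] [UniformSpace F] [IsUniformAddGroup F] [ContinuousSMul 𝕜 F]

/-- The image of an absolutely convex compact set under a continuous linear map is
absolutely convex compact. -/
lemma image_mem_kappaSets (L : F →L[𝕜] F) {S : Set F} (hS : S ∈ kappaSets 𝕜 F) :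
    L '' S ∈ kappaSets 𝕜 F := by
  obtain ⟨hc, hb, hv⟩ := hS
  refine ⟨hc.image L.continuous, ?_, hv.linear_image (L.toLinearMap.restrictScalars ℝ)⟩
  intro a ha
  rintro x ⟨y, ⟨z, hz, rfl⟩, rfl⟩
  exact ⟨a • z, hb a ha ⟨z, hz, rfl⟩, map_smul L a z⟩

/-- Pre-composition with a fixed continuous linear map `L : F →L[𝕜] F` mapping `κ`-sets into
`κ`-sets, as a continuous linear map `F'_κ →L[𝕜] F'_κ`. -/
noncomputable def precompCLM (L : F →L[𝕜] F)
    (hL : ∀ S ∈ kappaSets 𝕜 F, L '' S ∈ kappaSets 𝕜 F) :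
    DualKappa 𝕜 F →L[𝕜] DualKappa 𝕜 F where
  toFun φ := (φ : F →L[𝕜] 𝕜).comp L
  map_add' φ ψ := ContinuousLinearMap.add_comp φ ψ L
  map_smul' a φ := ContinuousLinearMap.smul_comp a φ L
  cont := by
    refine (UniformConvergenceCLM.isEmbedding_coeFn _ _ _).continuous_iff.mpr ?_
    change Continuous ((fun g : F → 𝕜 =>
      UniformOnFun.ofFun (kappaSets 𝕜 F) (g ∘ L)) ∘ DFunLike.coe)
    exact (UniformOnFun.precomp_uniformContinuous hL).continuous.comp
      (UniformConvergenceCLM.isEmbedding_coeFn _ _ _).continuous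

/-- An equicontinuous, pointwise convergent sequence of maps converges uniformly on
compact sets. -/
lemma tendstoUniformlyOn_of_equicontinuous {G : ℕ → F → F} {g : F → F}
    (hequi : Equicontinuous G) (hpt : ∀ x, Tendsto (fun k => G k x) atTop (𝓝 (g x)))
    {S : Set F} (hS : IsCompact S) : TendstoUniformlyOn G g atTop S := by
  haveI : CompactSpace S := isCompact_iff_compactSpace.mp hS
  rw [tendstoUniformlyOn_iff_tendstoUniformly_comp_coe]
  have hres : Equicontinuous fun k => S.restrict (G k) :=
    (equicontinuous_restrict_iff _).mpr (hequi.equicontinuousOn S)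
  have h := (hres.tendsto_uniformFun_iff_pi atTop (S.restrict g)).mpr ?_
  · exact UniformFun.tendsto_iff_tendstoUniformly.mp h
  · rw [tendsto_pi_nhds]
    exact fun x => hpt x

end Aux

set_option maxHeartbeats 1000000 in
/-- If `F` and `E` are complete locally convex Hausdorff spaces and `F` has an
equicontinuous Schauder basis `(fₙ)` with coefficient functionals `(λₙ)`, then the completed
injective tensor product `F ⊗̂_ε E` — realized as the closure of the finite-rank operators
`F ⊗ E` inside the (complete) ε-product `F ε E` — is all of `F ε E`, and every
`u ∈ F ⊗̂_ε E = F ε E` has the series representation `u(f') = Σₙ f'(fₙ) • u(λₙ)`. -/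
theorem stmt4 {𝕜 F E : Type*} [RCLike 𝕜]
    [AddCommGroup F] [Module 𝕜 F] [UniformSpace F] [IsUniformAddGroup F]
    [ContinuousSMul 𝕜 F] [T2Space F] [Module ℝ F] [IsScalarTower ℝ 𝕜 F]
    [LocallyConvexSpace ℝ F] [CompleteSpace F]
    [AddCommGroup E] [Module 𝕜 E] [UniformSpace E] [IsUniformAddGroup E]
    [ContinuousSMul 𝕜 E] [T2Space E] [Module ℝ E] [IsScalarTower ℝ 𝕜 E]
    [LocallyConvexSpace ℝ E] [CompleteSpace E]
    (f : ℕ → F) (lam : ℕ → F →L[𝕜] 𝕜)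
    (hrepr : ∀ x : F,
      Tendsto (fun k => ∑ n ∈ Finset.range k, lam n x • f n) atTop (𝓝 x))
    (huniq : ∀ (x : F) (c : ℕ → 𝕜),
      Tendsto (fun k => ∑ n ∈ Finset.range k, c n • f n) atTop (𝓝 x) →
        c = fun n => lam n x)
    (hequi : Equicontinuous
      (fun k : ℕ => fun x : F => ∑ n ∈ Finset.range k, lam n x • f n)) :
    -- `F ⊗ E` (the finite-rank operators) is dense in `F ε E`, i.e. `F ⊗̂_ε E ≅ F ε E`:
    Dense {u : EpsilonProduct 𝕜 F E |
      ∃ (m : ℕ) (g : Fin m → F) (e : Fin m → E),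
        ∀ f' : F →L[𝕜] 𝕜, u f' = ∑ i, f' (g i) • e i} ∧
    -- and every element of `F ⊗̂_ε E = F ε E` has a series representation:
    (∀ u : EpsilonProduct 𝕜 F E, ∀ f' : F →L[𝕜] 𝕜,
      Tendsto (fun k => ∑ n ∈ Finset.range k, f' (f n) • u (lam n)) atTop (𝓝 (u f'))) := by
  classical
  -- the partial-sum operators
  set P : ℕ → F →L[𝕜] F := fun k => ∑ n ∈ Finset.range k, (lam n).smulRight (f n) with hPdef
  have hPapp : ∀ k x, P k x = ∑ n ∈ Finset.range k, lam n x • f n := by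
    intro k x
    simp [hPdef, ContinuousLinearMap.sum_apply, ContinuousLinearMap.smulRight_apply]
  -- uniform convergence of the partial sums on compact sets
  have hA : ∀ S : Set F, IsCompact S → TendstoUniformlyOn (fun k x => P k x) id atTop S := by
    intro S hS
    have h := tendstoUniformlyOn_of_equicontinuous
      (G := fun k x => ∑ n ∈ Finset.range k, lam n x • f n) (g := id) hequi
      (fun x => hrepr x) hS
    have heq : (fun k (x : F) => P k x) = fun k x => ∑ n ∈ Finset.range k, lam n x • f n :=
      funext fun k => funext fun x => hPapp k x
    rw [heq]; exact h
  -- the transposed operators on the dual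
  set C : ℕ → DualKappa 𝕜 F →L[𝕜] DualKappa 𝕜 F :=
    fun k => precompCLM (P k) (fun S hS => image_mem_kappaSets (P k) hS) with hCdef
  have hCapp : ∀ (k) (φ : F →L[𝕜] 𝕜) (x : F), C k φ x = φ (P k x) := fun _ _ _ => rfl
  -- the key algebraic identity
  have hsum : ∀ (k) (f' : F →L[𝕜] 𝕜) (u : EpsilonProduct 𝕜 F E),
      u (C k f') = ∑ n ∈ Finset.range k, f' (f n) • u (lam n) := by
    intro k f' u
    have hCsum : C k f' = ∑ n ∈ Finset.range k, f' (f n) • UniformConvergenceCLM.ofFun (σ := RingHom.id 𝕜) (F := 𝕜) (kappaSets 𝕜 F) (lam n) := by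
      refine ContinuousLinearMap.ext fun x => ?_
      show (C k f' : F →L[𝕜] 𝕜) x = (∑ n ∈ Finset.range k, f' (f n) • lam n : F →L[𝕜] 𝕜) x
      simp only [hCapp, hPapp, map_sum, map_smul, ContinuousLinearMap.coe_sum',
        Finset.sum_apply, ContinuousLinearMap.coe_smul', Pi.smul_apply, smul_eq_mul]
      exact Finset.sum_congr rfl fun n _ => mul_comm _ _
    rw [hCsum, map_sum]
    exact Finset.sum_congr rfl fun n _ => map_smul u _ _
  -- Part 2: the series representation
  have hpart2 : ∀ u : EpsilonProduct 𝕜 F E, ∀ f' : F →L[𝕜] 𝕜,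
      Tendsto (fun k => ∑ n ∈ Finset.range k, f' (f n) • u (lam n)) atTop (𝓝 (u f')) := by
    intro u f'
    have h1 : Tendsto (fun k => C k f') atTop (𝓝 (f' : DualKappa 𝕜 F)) := by
      refine (UniformConvergenceCLM.tendsto_iff_tendstoUniformlyOn _ _ _).mpr ?_
      intro S hS
      exact f'.uniformContinuous.comp_tendstoUniformlyOn (hA S hS.1)
    have h3 : Tendsto (fun k => u (C k f')) atTop (𝓝 (u f')) :=
      ((ContinuousLinearMap.continuous u).tendsto (f' : DualKappa 𝕜 F)).comp h1
    have h4 : (fun k => u (C k f')) = fun k => ∑ n ∈ Finset.range k, f' (f n) • u (lam n) :=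
      funext fun k => hsum k f' u
    rwa [h4] at h3
  refine ⟨?_, hpart2⟩
  -- Part 1: density of the finite-rank operators
  intro u
  let uk : ℕ → EpsilonProduct 𝕜 F E := fun k => ContinuousLinearMap.comp u (C k)
  have hmem : ∀ k, uk k ∈
      {u : EpsilonProduct 𝕜 F E | ∃ (m : ℕ) (g : Fin m → F) (e : Fin m → E),
        ∀ f' : F →L[𝕜] 𝕜, u f' = ∑ i, f' (g i) • e i} := by
    intro k
    refine ⟨k, fun i => f i.1, fun i => u (lam i.1), fun f' => ?_⟩
    have : uk k f' = u (C k f') := rfl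
    rw [this, hsum k f' u, ← Fin.sum_univ_eq_sum_range]
  have htend : Tendsto uk atTop (𝓝 u) := by
    rw [UniformConvergenceCLM.tendsto_iff_tendstoUniformlyOn]
    intro H hH
    have hHe : Equicontinuous (fun φ : H => (φ.1 : F → 𝕜)) := hH
    intro V hV
    rw [uniformity_eq_comap_nhds_zero E] at hV
    obtain ⟨W, hW, hWV⟩ := hV
    -- continuity of `u` at `0` and a basic neighborhood
    have hu0 : Filter.Tendsto u (𝓝 (0 : DualKappa 𝕜 F)) (𝓝 (0 : E)) := by
      have h := (ContinuousLinearMap.continuous u).tendsto (0 : DualKappa 𝕜 F)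
      exact (ContinuousLinearMap.continuous u).tendsto' _ _ (map_zero u)
    have hW' : u ⁻¹' W ∈ 𝓝 (0 : DualKappa 𝕜 F) := hu0 hW
    obtain ⟨⟨S, W₀⟩, ⟨hS, hW₀⟩, hsub⟩ :=
      ((UniformConvergenceCLM.hasBasis_nhds_zero (RingHom.id 𝕜) 𝕜 (kappaSets 𝕜 F)
        (kappaSets_nonempty_s4 𝕜 F) (kappaSets_directedOn 𝕜 F)).mem_iff).mp hW'
    -- equicontinuity of `H` at `0`
    have hU0 : ((fun p : 𝕜 × 𝕜 => p.2 - p.1) ⁻¹' W₀) ∈ 𝓤 𝕜 := by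
      rw [uniformity_eq_comap_nhds_zero 𝕜]
      exact Filter.preimage_mem_comap hW₀
    obtain ⟨U, hUmem, hUprop⟩ := (hHe 0 _ hU0).exists_mem
    -- uniform convergence of the partial sums on S, within U
    have hUF : ((fun p : F × F => p.2 - p.1) ⁻¹' U) ∈ 𝓤 F := by
      rw [uniformity_eq_comap_nhds_zero F]
      exact Filter.preimage_mem_comap hUmem
    have hF := hA S hS.1 _ hUF
    filter_upwards [hF] with k hk f' hf'
    -- show the pair is in V
    apply hWV
    show uk k f' - u f' ∈ W
    have hψ : C k f' - f' ∈ {ψ : DualKappa 𝕜 F | ∀ x ∈ S, ψ x ∈ W₀} := by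
      intro x hx
      have hy : P k x - x ∈ U := hk x hx
      have hval := hUprop _ hy ⟨f', hf'⟩
      simp only [Set.mem_preimage, map_zero, sub_zero] at hval
      have hx2 : (C k f' - f') x = f' (P k x - x) := by
        have : (C k f' - f') x = C k f' x - f' x := rfl
        rw [this, map_sub]; rfl
      rwa [hx2]
    have hmemW : u (C k f' - f') ∈ W := hsub hψ
    have heq : u (C k f' - f') = uk k f' - u f' := by
      rw [map_sub]; rfl
    rwa [heq] at hmemW

  exact mem_closure_of_tendsto htend (Filter.Eventually.of_forall hmem)
end

section
/- Let F(Ω) ⊆ K^Ω and F(Ω,E) ⊆ E^Ω be locally convex Hausdorff spaces with continuous point evaluations on F(Ω), such that S : F(Ω) ε E → F(Ω,E), S(u)(x) = u(δₓ), is an isomorphism into. Suppose there is a sequence (fₙ) in F(Ω) and for every f ∈ F(Ω,E) a sequence (λₙ^E(f)) in E with f = Σₙ λₙ^E(f) fₙ convergent in F(Ω,E). If F(Ω) and E are sequentially complete, then S is surjective, i.e., F(Ω,E) ≅ F(Ω) ε E. -/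
open Filter Topology

section MyHelpers
open Set Pointwise


variable {𝕜 G : Type*}

/-- In a sequentially-complete-free setting: closed absolutely convex neighborhoods form
a basis at `0`. -/
lemma exists_closed_absConvex_nhd [RCLike 𝕜] [AddCommGroup G] [Module 𝕜 G] [Module ℝ G]
    [IsScalarTower ℝ 𝕜 G] [TopologicalSpace G] [IsTopologicalAddGroup G]
    [ContinuousSMul 𝕜 G] [LocallyConvexSpace ℝ G] {W : Set G} (hW : W ∈ 𝓝 (0 : G)) :
    ∃ V ∈ 𝓝 (0 : G), V ⊆ W ∧ IsClosed V ∧ Balanced 𝕜 V ∧ Convex ℝ V := by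
  haveI : ContinuousSMul ℝ G := IsScalarTower.continuousSMul (M := ℝ) (α := G) 𝕜
  haveI : SMulCommClass ℝ 𝕜 G := IsScalarTower.to_smulCommClass
  obtain ⟨C, hC, hCcl, hCW⟩ : ∃ C ∈ 𝓝 (0 : G), IsClosed C ∧ C ⊆ W := by
    rcases (closed_nhds_basis (0 : G)).mem_iff.mp hW with ⟨C, ⟨hC1, hC2⟩, hC3⟩
    exact ⟨C, hC1, hC2, hC3⟩
  obtain ⟨s, ⟨hs1, hs2⟩, hs3⟩ : ∃ s : Set G, (s ∈ 𝓝 (0 : G) ∧ Balanced 𝕜 s ∧ Convex ℝ s) ∧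
      s ⊆ C := by
    obtain ⟨t, ⟨ht1, ht2⟩, ht3⟩ := (LocallyConvexSpace.convex_basis_zero ℝ G).mem_iff.mp hC
    refine ⟨convexHull ℝ (balancedCore 𝕜 t), ⟨mem_of_superset (balancedCore_mem_nhds_zero ht1)
      (subset_convexHull ℝ _), ?_, convex_convexHull ℝ _⟩,
      (convexHull_min (balancedCore_subset t) ht2).trans ht3⟩
    intro a ha
    let L : G →ₗ[ℝ] G :=
      { toFun := fun x => a • x, map_add' := smul_add a, map_smul' := fun r x => (smul_comm r a x).symm }
    have hL : a • convexHull ℝ (balancedCore 𝕜 t) = convexHull ℝ (a • balancedCore 𝕜 t) :=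
      L.image_convexHull (balancedCore 𝕜 t)
    rw [hL]
    exact convexHull_mono ((balancedCore_balanced t) a ha)
  refine ⟨closure s, mem_of_superset hs1 subset_closure, ?_, isClosed_closure,
    hs2.1.closure, hs2.2.closure⟩
  exact (closure_minimal hs3 hCcl).trans hCW

/-- One direction of the bipolar theorem, via Hahn–Banach separation. -/
lemma mem_of_dual_le_one [RCLike 𝕜] [AddCommGroup G] [Module 𝕜 G] [Module ℝ G]
    [IsScalarTower ℝ 𝕜 G] [TopologicalSpace G] [IsTopologicalAddGroup G]
    [ContinuousSMul 𝕜 G] [LocallyConvexSpace ℝ G] {V : Set G}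
    (hCl : IsClosed V) (hBal : Balanced 𝕜 V) (hCx : Convex ℝ V) (h0 : (0 : G) ∈ V) {z : G}
    (hz : ∀ e' : G →L[𝕜] 𝕜, (∀ v ∈ V, ‖e' v‖ ≤ 1) → ‖e' z‖ ≤ 1) : z ∈ V := by
  by_contra hzV
  obtain ⟨e, u, hVu, huz⟩ := RCLike.geometric_hahn_banach_closed_point (𝕜 := 𝕜) hCx hCl hzV
  have hu0 : 0 < u := by simpa using hVu 0 h0
  have key : ∀ v ∈ V, ‖e v‖ ≤ u := by
    intro v hv
    rcases eq_or_ne (e v) 0 with h | h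
    · simp [h, hu0.le]
    · set c : 𝕜 := (‖e v‖ : 𝕜) / (e v) with hc
      have hcn : ‖c‖ = 1 := by
        rw [hc, norm_div, RCLike.norm_ofReal, abs_of_nonneg (norm_nonneg _),
          div_self (norm_ne_zero_iff.mpr h)]
      have hcv : c • v ∈ V := hBal c (le_of_eq hcn) (smul_mem_smul_set hv)
      have : e (c • v) = (‖e v‖ : 𝕜) := by
        rw [map_smul, smul_eq_mul, hc, div_mul_cancel₀ _ h]
      have h2 := hVu _ hcv
      rw [this, RCLike.ofReal_re] at h2
      exact h2.le
  set e' : G →L[𝕜] 𝕜 := ((u⁻¹ : ℝ) : 𝕜) • e with he'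
  have h1 : ∀ v ∈ V, ‖e' v‖ ≤ 1 := by
    intro v hv
    rw [he', ContinuousLinearMap.smul_apply, norm_smul, RCLike.norm_ofReal,
      abs_of_pos (inv_pos.mpr hu0)]
    rw [inv_mul_le_iff₀ hu0, mul_one]
    exact key v hv
  have h2 := hz e' h1
  rw [he', ContinuousLinearMap.smul_apply, norm_smul, RCLike.norm_ofReal,
    abs_of_pos (inv_pos.mpr hu0), inv_mul_le_iff₀ hu0, mul_one] at h2
  exact absurd ((RCLike.re_le_norm (e z)).trans h2) (not_le.mpr huz)



/-- General Alaoglu–Bourbaki: the polar of a neighborhood of zero is weak-* compact. -/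
lemma isCompact_polar_nhds [RCLike 𝕜] [AddCommGroup G] [Module 𝕜 G]
    [TopologicalSpace G] [IsTopologicalAddGroup G] [ContinuousSMul 𝕜 G]
    {V : Set G} (hV : V ∈ 𝓝 (0 : G)) :
    IsCompact {e' : WeakDual 𝕜 G | ∀ v ∈ V, ‖e' v‖ ≤ 1} := by
  set P : Set (WeakDual 𝕜 G) := {e' : WeakDual 𝕜 G | ∀ v ∈ V, ‖e' v‖ ≤ 1} with hP
  have hbound : ∀ y : G, ∃ r : ℝ, ∀ g : WeakDual 𝕜 G, g ∈ P → ‖g y‖ ≤ r := by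
    intro y
    obtain ⟨r, hr, hrc⟩ := (absorbent_nhds_zero (𝕜 := 𝕜) hV y).exists_pos
    have : y ∈ ((r : 𝕜)) • V := by
      refine hrc (r : 𝕜) ?_ rfl
      rw [RCLike.norm_ofReal, abs_of_pos hr]
    obtain ⟨v, hv, rfl⟩ := this
    refine ⟨r, fun g hg => ?_⟩
    rw [map_smul, smul_eq_mul, norm_mul, RCLike.norm_ofReal, abs_of_pos hr]
    exact mul_le_of_le_one_right hr.le (hg v hv)
  choose r hr using hbound
  set A : Set (G → 𝕜) := {g : G → 𝕜 | (∀ x y, g (x + y) = g x + g y) ∧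
      (∀ (c : 𝕜) (x : G), g (c • x) = c * g x) ∧ (∀ v ∈ V, ‖g v‖ ≤ 1) ∧
      ∀ y : G, ‖g y‖ ≤ r y} with hA
  have hAclosed : IsClosed A := by
    rw [hA]
    simp only [setOf_and, setOf_forall]
    apply IsClosed.inter
    · exact isClosed_iInter fun x => isClosed_iInter fun y =>
        isClosed_eq (continuous_apply (x + y)) ((continuous_apply x).add (continuous_apply y))
    apply IsClosed.inter
    · exact isClosed_iInter fun c => isClosed_iInter fun x =>
        isClosed_eq (continuous_apply _) (continuous_const.mul (continuous_apply _))
    apply IsClosed.inter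
    · exact isClosed_iInter fun v => isClosed_iInter fun _ =>
        isClosed_le (continuous_apply v).norm continuous_const
    · exact isClosed_iInter fun y => isClosed_le (continuous_apply y).norm continuous_const
  have hAcomp : IsCompact A := by
    refine (isCompact_univ_pi fun y => isCompact_closedBall (0 : 𝕜) (r y)).of_isClosed_subset
      hAclosed ?_
    intro g hg
    rw [mem_univ_pi]
    intro y
    rw [Metric.mem_closedBall, dist_zero_right]
    exact hg.2.2.2 y
  have himg : (DFunLike.coe : WeakDual 𝕜 G → G → 𝕜) '' P = A := by
    apply Subset.antisymm
    · rintro _ ⟨e', he', rfl⟩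
      exact ⟨fun x y => map_add e' x y, fun c x => map_smul e' c x, he', fun y => hr y e' he'⟩
    · rintro g ⟨hadd, hsmul, hpol, -⟩
      have hg0 : g 0 = 0 := by
        have := hsmul 0 0
        simpa using this
      set lin : G →ₗ[𝕜] 𝕜 :=
        { toFun := g, map_add' := hadd, map_smul' := fun c x => hsmul c x } with hlin
      have hcont : Continuous g := by
        refine continuous_of_continuousAt_zero lin.toAddMonoidHom ?_
        rw [ContinuousAt, show lin.toAddMonoidHom 0 = 0 from hg0]
        rw [Metric.tendsto_nhds]
        intro ε hε
        have hc : ((ε / 2 : ℝ) : 𝕜) ≠ 0 :=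
          RCLike.ofReal_ne_zero.mpr (half_pos hε).ne'
        filter_upwards [(set_smul_mem_nhds_zero_iff hc).mpr hV] with x hx
        obtain ⟨v, hv, rfl⟩ := hx
        rw [dist_zero_right]
        show ‖g _‖ < ε
        rw [hsmul, norm_mul, RCLike.norm_ofReal, abs_of_pos (half_pos hε)]
        calc ε / 2 * ‖g v‖ ≤ ε / 2 * 1 := by
              exact mul_le_mul_of_nonneg_left (hpol v hv) (half_pos hε).le
          _ < ε := by linarith
      refine ⟨({ toLinearMap := lin, cont := hcont } : G →L[𝕜] 𝕜), hpol, rfl⟩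
  have hemb : Topology.IsEmbedding (DFunLike.coe : WeakDual 𝕜 G → G → 𝕜) :=
    DFunLike.coe_injective.isEmbedding_induced
  exact hemb.isCompact_iff.mpr (himg ▸ hAcomp)

lemma cauchySeq_of_sub' {G : Type*} [AddCommGroup G] [UniformSpace G] [IsUniformAddGroup G]
    {x : ℕ → G} (h : ∀ V ∈ 𝓝 (0 : G), ∃ N, ∀ k, N ≤ k → ∀ m, N ≤ m → x k - x m ∈ V) :
    CauchySeq x := by
  rw [cauchySeq_iff_tendsto, uniformity_eq_comap_nhds_zero G, Filter.tendsto_comap_iff]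
  rw [Filter.tendsto_atTop']
  intro s hs
  obtain ⟨N, hN⟩ := h s hs
  refine ⟨(N, N), fun b hb => ?_⟩
  exact hN b.2 hb.2 b.1 hb.1

section DK
variable {𝕜 F : Type*} [RCLike 𝕜] [AddCommGroup F] [Module 𝕜 F] [Module ℝ F]
    [UniformSpace F] [IsUniformAddGroup F] [ContinuousSMul 𝕜 F]

/-- Singletons in the dual are equicontinuous. -/
lemma equicontinuous_singleton (φ : DualKappa 𝕜 F) :
    Equicontinuous (fun ψ : ({φ} : Set (DualKappa 𝕜 F)) => (ψ.1 : F → 𝕜)) := by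
  intro x u hu
  have hc : Filter.Tendsto (⇑φ) (𝓝 x) (𝓝 (φ x)) := φ.continuous.continuousAt
  filter_upwards [hc (UniformSpace.ball_mem_nhds (φ x) hu)] with y hy i
  have hi : i.1 = φ := i.2
  rw [hi]
  exact hy

/-- The polar of a neighborhood of zero is an equicontinuous set in the dual. -/
lemma equicontinuous_polar_nhds {U : Set F} (hU : U ∈ 𝓝 (0 : F)) :
    Equicontinuous
      (fun ψ : {φ : DualKappa 𝕜 F | ∀ y ∈ U, ‖φ y‖ ≤ 1} => (ψ.1 : F → 𝕜)) := by
  intro x u hu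
  obtain ⟨ε, hε, hball⟩ := Metric.mem_uniformity_dist.mp hu
  have hc : ((ε / 2 : ℝ) : 𝕜) ≠ 0 := RCLike.ofReal_ne_zero.mpr (half_pos hε).ne'
  have hsm : (fun y : F => y - x) ⁻¹' (((ε / 2 : ℝ) : 𝕜) • U) ∈ 𝓝 x := by
    have ht : Filter.Tendsto (fun y : F => y - x) (𝓝 x) (𝓝 (0 : F)) := by
      have := ((continuous_id.sub continuous_const).tendsto x :
        Filter.Tendsto (fun y : F => y - x) (𝓝 x) (𝓝 (x - x)))
      exact tendsto_sub_nhds_zero_iff.mpr tendsto_id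
    exact ht ((set_smul_mem_nhds_zero_iff hc).mpr hU)
  filter_upwards [hsm] with y hy i
  obtain ⟨v, hv, hyv⟩ := hy
  apply hball
  rw [dist_eq_norm, ← map_sub]
  simp only at hyv
  have hxy : x - y = -(((ε / 2 : ℝ) : 𝕜) • v) := by
    rw [hyv]; abel
  rw [hxy, map_neg, norm_neg, map_smul, norm_smul, RCLike.norm_ofReal,
    abs_of_pos (half_pos hε)]
  calc ε / 2 * ‖i.1 v‖ ≤ ε / 2 * 1 :=
        mul_le_mul_of_nonneg_left (i.2 v hv) (half_pos hε).le
    _ < ε := by linarith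

end DK
end MyHelpers

set_option maxHeartbeats 1600000

/-- Let `F(Ω) ⊆ 𝕜^Ω` and `F(Ω,E) ⊆ E^Ω` be locally convex Hausdorff spaces
with continuous point evaluations on `F(Ω)` and `S : F(Ω) ε E → F(Ω,E)`, `S(u)(x) = u(δₓ)`,
an isomorphism into.  Suppose there is a sequence `(fₙ)` in `F(Ω)` such that every
`f ∈ F(Ω,E)` has a representation `f = Σₙ λₙᴱ(f) • fₙ` convergent in `F(Ω,E)`.  If `F(Ω)`
and `E` are sequentially complete, then `S` is surjective, i.e. `F(Ω,E) ≅ F(Ω) ε E`. -/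
theorem stmt7 {𝕜 Ω FF FE E : Type*} [RCLike 𝕜]
    [FunLike FF Ω 𝕜] [AddCommGroup FF] [Module 𝕜 FF] [UniformSpace FF]
    [IsUniformAddGroup FF] [ContinuousSMul 𝕜 FF] [T2Space FF] [Module ℝ FF]
    [IsScalarTower ℝ 𝕜 FF] [LocallyConvexSpace ℝ FF]
    [AddCommGroup E] [Module 𝕜 E] [UniformSpace E] [IsUniformAddGroup E]
    [ContinuousSMul 𝕜 E] [T2Space E] [Module ℝ E] [IsScalarTower ℝ 𝕜 E]
    [LocallyConvexSpace ℝ E]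
    [FunLike FE Ω E] [AddCommGroup FE] [Module 𝕜 FE] [UniformSpace FE]
    [IsUniformAddGroup FE] [ContinuousSMul 𝕜 FE] [T2Space FE] [Module ℝ FE]
    [IsScalarTower ℝ 𝕜 FE] [LocallyConvexSpace ℝ FE]
    -- the point evaluations `δₓ ∈ F(Ω)'`:
    (δ : Ω → (FF →L[𝕜] 𝕜)) (hδ : ∀ (x : Ω) (g : FF), δ x g = g x)
    -- `S` is an isomorphism into:
    (S : EpsilonProduct 𝕜 FF E →ₗ[𝕜] FE)
    (hS : ∀ (u : EpsilonProduct 𝕜 FF E) (x : Ω), S u x = u (δ x))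
    (hSemb : IsInducing (⇑S)) (hSinj : Function.Injective (⇑S))
    -- `F(Ω)` and `E` are sequentially complete:
    (hFsc : ∀ x : ℕ → FF, CauchySeq x → ∃ l, Tendsto x atTop (𝓝 l))
    (hEsc : ∀ x : ℕ → E, CauchySeq x → ∃ l, Tendsto x atTop (𝓝 l))
    -- every `f ∈ F(Ω,E)` has a convergent series representation `f = Σₙ λₙᴱ(f) fₙ`:
    (f : ℕ → FF)
    (hserie : ∀ g : FE, ∃ lamE : ℕ → E, ∃ psum : ℕ → FE,
      (∀ (k : ℕ) (x : Ω), psum k x = ∑ n ∈ Finset.range k, f n x • lamE n) ∧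
      Tendsto psum atTop (𝓝 g)) :
    Function.Surjective (⇑S) := by
  classical
  haveI : ContinuousSMul ℝ FF := IsScalarTower.continuousSMul (M := ℝ) (α := FF) 𝕜
  haveI : ContinuousSMul ℝ E := IsScalarTower.continuousSMul (M := ℝ) (α := E) 𝕜
  intro g
  obtain ⟨lamE, psum, hpsum, hlim⟩ := hserie g
  -- evaluation at `f n` is continuous on the κ-dual
  have heval : ∀ n : ℕ, Continuous (fun φ : DualKappa 𝕜 FF => φ (f n)) := by
    intro n
    have hD : ((fun c : 𝕜 => c • f n) '' Metric.closedBall 0 1) ∈ kappaSets 𝕜 FF := by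
      refine ⟨(isCompact_closedBall (0 : 𝕜) 1).image
        (continuous_id.smul continuous_const), ?_, ?_⟩
      · intro a ha
        rintro _ ⟨_, ⟨c, hc, rfl⟩, rfl⟩
        refine ⟨a * c, ?_, show (a * c) • f n = a • c • f n from mul_smul a c (f n)⟩
        rw [Metric.mem_closedBall, dist_zero_right] at hc ⊢
        calc ‖a * c‖ = ‖a‖ * ‖c‖ := norm_mul a c
          _ ≤ 1 * 1 := mul_le_mul ha hc (norm_nonneg c) zero_le_one
          _ = 1 := one_mul 1
      · have hlin : Convex ℝ ((fun c : 𝕜 => c • f n) '' Metric.closedBall 0 1) := by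
          let L : 𝕜 →ₗ[ℝ] FF :=
            { toFun := fun c => c • f n
              map_add' := fun a b => add_smul a b (f n)
              map_smul' := fun t c => by simp [smul_assoc] }
          exact (convex_closedBall (0 : 𝕜) 1).linear_image L
        exact hlin
    have hmem : f n ∈ (fun c : 𝕜 => c • f n) '' Metric.closedBall 0 1 :=
      ⟨1, by simp, one_smul 𝕜 (f n)⟩
    exact ((UniformOnFun.uniformContinuous_eval_of_mem 𝕜 (kappaSets 𝕜 FF) hmem hD).comp
      (UniformConvergenceCLM.isUniformInducing_coeFn _ _ _).uniformContinuous).continuous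
  -- the finite-rank partial sums in the ε-product
  let evalCLM : ℕ → (DualKappa 𝕜 FF →L[𝕜] 𝕜) := fun n =>
    { toFun := fun φ => φ (f n)
      map_add' := fun φ ψ => rfl
      map_smul' := fun c φ => rfl
      cont := heval n }
  let U : ℕ → EpsilonProduct 𝕜 FF E := fun k =>
    ∑ n ∈ Finset.range k, (ContinuousLinearMap.toSpanSingleton 𝕜 (lamE n)).comp (evalCLM n)
  have hUapp : ∀ (k) (φ : DualKappa 𝕜 FF),
      U k φ = ∑ n ∈ Finset.range k, φ (f n) • lamE n := by
    intro k φ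
    show (∑ n ∈ Finset.range k,
      (ContinuousLinearMap.toSpanSingleton 𝕜 (lamE n)).comp (evalCLM n)) φ = _
    rw [ContinuousLinearMap.sum_apply]
    exact Finset.sum_congr rfl fun n _ => rfl
  have hSU : ∀ k, S (U k) = psum k := by
    intro k
    apply DFunLike.coe_injective
    funext x
    show S (U k) x = psum k x
    rw [hS, hpsum, hUapp k (δ x)]
    exact Finset.sum_congr rfl fun n _ => congrArg (· • lamE n) (hδ x (f n))
  -- Cauchy property of `U` in the ε-product
  have hCauchy : Filter.Tendsto (fun p : ℕ × ℕ => U p.1 - U p.2) (atTop ×ˢ atTop)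
      (𝓝 (0 : EpsilonProduct 𝕜 FF E)) := by
    have hdiff : Filter.Tendsto (fun p : ℕ × ℕ => psum p.1 - psum p.2) (atTop ×ˢ atTop)
        (𝓝 (0 : FE)) := by
      have := (hlim.comp tendsto_fst).sub (hlim.comp tendsto_snd)
      simpa using this
    rw [hSemb.nhds_eq_comap, map_zero, Filter.tendsto_comap_iff]
    have hcomp : (⇑S ∘ fun p : ℕ × ℕ => U p.1 - U p.2) =
        fun p : ℕ × ℕ => psum p.1 - psum p.2 := by
      funext p
      show S (U p.1 - U p.2) = _
      rw [map_sub, hSU, hSU]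
    rw [hcomp]
    exact hdiff
  -- uniform Cauchy estimates on equicontinuous sets
  have claimA : ∀ H : Set (DualKappa 𝕜 FF),
      Equicontinuous (fun φ : H => (φ.1 : FF → 𝕜)) → ∀ V ∈ 𝓝 (0 : E),
      ∃ N, ∀ k, N ≤ k → ∀ m, N ≤ m → ∀ φ ∈ H, U k φ - U m φ ∈ V := by
    intro H hH V hV
    have h1 := (UniformConvergenceCLM.tendsto_iff_tendstoUniformlyOn _ _ _).mp hCauchy H hH
    have hu : {q : E × E | q.2 - q.1 ∈ V} ∈ uniformity E := by
      rw [uniformity_eq_comap_nhds_zero E]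
      exact Filter.preimage_mem_comap hV
    have h2 := h1 _ hu
    rw [prod_atTop_atTop_eq, eventually_atTop] at h2
    obtain ⟨a, ha⟩ := h2
    refine ⟨max a.1 a.2, fun k hk m hm φ hφ => ?_⟩
    have h3 := ha (k, m) ⟨le_trans (le_max_left _ _) hk, le_trans (le_max_right _ _) hm⟩ φ hφ
    have h4 : U k φ - U m φ - (0 : EpsilonProduct 𝕜 FF E) φ ∈ V := h3
    simpa using h4
  -- pointwise limits exist
  have hptCauchy : ∀ φ : DualKappa 𝕜 FF, ∃ l, Filter.Tendsto (fun k => U k φ) atTop (𝓝 l) := by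
    intro φ
    apply hEsc
    apply cauchySeq_of_sub'
    intro V hV
    obtain ⟨N, hN⟩ := claimA {φ} (equicontinuous_singleton φ) V hV
    exact ⟨N, fun k hk m hm => hN k hk m hm φ rfl⟩
  choose uL huL using hptCauchy
  have hadd : ∀ φ ψ, uL (φ + ψ) = uL φ + uL ψ := by
    intro φ ψ
    refine tendsto_nhds_unique (huL (φ + ψ)) ?_
    have h1 : (fun k => U k (φ + ψ)) = fun k => U k φ + U k ψ :=
      funext fun k => map_add (U k) φ ψ
    rw [h1]
    exact (huL φ).add (huL ψ)
  have hsmul : ∀ (c : 𝕜) (φ), uL (c • φ) = c • uL φ := by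
    intro c φ
    refine tendsto_nhds_unique (huL (c • φ)) ?_
    have h1 : (fun k => U k (c • φ)) = fun k => c • U k φ :=
      funext fun k => map_smul (U k) c φ
    rw [h1]
    exact (huL φ).const_smul c
  -- the continuity estimate
  have hcont0 : ∀ V' ∈ 𝓝 (0 : E), ∃ K ∈ kappaSets 𝕜 FF,
      ∀ φ : DualKappa 𝕜 FF, (∀ y ∈ K, ‖φ y‖ ≤ 1) → uL φ ∈ V' := by
    intro V' hV'
    obtain ⟨V, hVnhd, hVsub, hVcl, hVbal, hVcx⟩ := exists_closed_absConvex_nhd (𝕜 := 𝕜) hV'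
    set P : Set (WeakDual 𝕜 E) := {e' : WeakDual 𝕜 E | ∀ v ∈ V, ‖e' v‖ ≤ 1} with hPdef
    set w : ℕ → WeakDual 𝕜 E → FF :=
      fun k e' => ∑ n ∈ Finset.range k, e' (lamE n) • f n with hwdef
    have hkey : ∀ (k) (φ : DualKappa 𝕜 FF) (e' : WeakDual 𝕜 E),
        e' (U k φ) = φ (w k e') := by
      intro k φ e'
      rw [hUapp, map_sum, map_sum]
      refine Finset.sum_congr rfl fun n _ => ?_
      rw [map_smul, map_smul, smul_eq_mul, smul_eq_mul, mul_comm]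
    have claimW : ∀ W ∈ 𝓝 (0 : FF), ∃ N, ∀ k, N ≤ k → ∀ m, N ≤ m →
        ∀ e' ∈ P, w k e' - w m e' ∈ W := by
      intro W hW
      obtain ⟨Uu, hUnhd, hUsub, hUcl, hUbal, hUcx⟩ := exists_closed_absConvex_nhd (𝕜 := 𝕜) hW
      obtain ⟨N, hN⟩ := claimA {φ : DualKappa 𝕜 FF | ∀ y ∈ Uu, ‖φ y‖ ≤ 1}
        (equicontinuous_polar_nhds hUnhd) V hVnhd
      refine ⟨N, fun k hk m hm e' he' => hUsub ?_⟩
      apply mem_of_dual_le_one (𝕜 := 𝕜) hUcl hUbal hUcx (mem_of_mem_nhds hUnhd)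
      intro ψ hψ
      have h1 := hN k hk m hm ψ hψ
      have h2 := he' _ h1
      rw [map_sub, hkey k ψ e', hkey m ψ e'] at h2
      rw [map_sub]
      exact h2
    have hTlim : ∀ e' : WeakDual 𝕜 E, e' ∈ P →
        ∃ l, Filter.Tendsto (fun k => w k e') atTop (𝓝 l) := by
      intro e' he'
      apply hFsc
      apply cauchySeq_of_sub'
      intro W hW
      obtain ⟨N, hN⟩ := claimW W hW
      exact ⟨N, fun k hk m hm => hN k hk m hm e' he'⟩
    choose! T hT using hTlim
    have hTuc : TendstoUniformlyOn (fun k e' => w k e') T atTop P := by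
      intro uu huu
      rw [uniformity_eq_comap_nhds_zero FF] at huu
      obtain ⟨W0, hW0, hW0sub⟩ := Filter.mem_comap.mp huu
      obtain ⟨W, hWnhd, hWsub, hWcl, -, -⟩ := exists_closed_absConvex_nhd (𝕜 := 𝕜) hW0
      obtain ⟨N, hN⟩ := claimW W hWnhd
      rw [eventually_atTop]
      refine ⟨N, fun k hk e' he' => ?_⟩
      apply hW0sub
      show w k e' - T e' ∈ W0
      apply hWsub
      have htm : Filter.Tendsto (fun m => w k e' - w m e') atTop (𝓝 (w k e' - T e')) :=
        tendsto_const_nhds.sub (hT e' he')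
      apply hWcl.mem_of_tendsto htm
      filter_upwards [eventually_ge_atTop N] with m hm
      exact hN k hk m hm e' he'
    have hwcont : ∀ k, Continuous (w k) := by
      intro k
      apply continuous_finset_sum
      intro n _
      exact (WeakDual.eval_continuous (lamE n)).smul continuous_const
    have hPcomp : IsCompact P := isCompact_polar_nhds (𝕜 := 𝕜) hVnhd
    have hTcont : ContinuousOn T P :=
      hTuc.continuousOn (Filter.Eventually.of_forall fun k => (hwcont k).continuousOn).frequently
    have hKcomp : IsCompact (T '' P) := hPcomp.image_of_continuousOn hTcont
    have hKbal : Balanced 𝕜 (T '' P) := by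
      intro a ha
      rintro _ ⟨_, ⟨e', he', rfl⟩, rfl⟩
      have haP : a • e' ∈ P := by
        intro v hv
        have h1 : (a • e') v = a • e' v := rfl
        rw [h1, smul_eq_mul, norm_mul]
        exact mul_le_one₀ ha (norm_nonneg _) (he' v hv)
      refine ⟨a • e', haP, ?_⟩
      refine tendsto_nhds_unique (hT _ haP) ?_
      have h1 : (fun k => w k (a • e')) = fun k => a • w k e' := by
        funext k
        rw [hwdef]
        rw [Finset.smul_sum]
        refine Finset.sum_congr rfl fun n _ => ?_
        have h2 : (a • e') (lamE n) = a • e' (lamE n) := rfl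
        rw [h2, smul_eq_mul, mul_smul]
      rw [h1]
      exact (hT e' he').const_smul a
    have hKcx : Convex ℝ (T '' P) := by
      rintro _ ⟨e1, he1, rfl⟩ _ ⟨e2, he2, rfl⟩ t s ht hs hts
      have h3P : t • e1 + s • e2 ∈ P := by
        intro v hv
        have h1 : (t • e1 + s • e2) v = t • e1 v + s • e2 v := rfl
        rw [h1]
        calc ‖t • e1 v + s • e2 v‖ ≤ ‖t • e1 v‖ + ‖s • e2 v‖ := norm_add_le _ _
          _ = t * ‖e1 v‖ + s * ‖e2 v‖ := by
              rw [norm_smul, norm_smul, Real.norm_eq_abs, Real.norm_eq_abs,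
                abs_of_nonneg ht, abs_of_nonneg hs]
          _ ≤ t * 1 + s * 1 := by
              gcongr
              · exact he1 v hv
              · exact he2 v hv
          _ = 1 := by rw [mul_one, mul_one, hts]
      refine ⟨t • e1 + s • e2, h3P, ?_⟩
      refine tendsto_nhds_unique (hT _ h3P) ?_
      have h1 : (fun k => w k (t • e1 + s • e2)) =
          fun k => t • w k e1 + s • w k e2 := by
        funext k
        rw [hwdef]
        rw [Finset.smul_sum, Finset.smul_sum, ← Finset.sum_add_distrib]
        refine Finset.sum_congr rfl fun n _ => ?_
        have h2 : (t • e1 + s • e2) (lamE n) = t • e1 (lamE n) + s • e2 (lamE n) := rfl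
        rw [h2, add_smul, smul_assoc, smul_assoc]
      rw [h1]
      exact ((hT e1 he1).const_smul t).add ((hT e2 he2).const_smul s)
    refine ⟨T '' P, ⟨hKcomp, hKbal, hKcx⟩, fun φ hφ => hVsub ?_⟩
    apply mem_of_dual_le_one (𝕜 := 𝕜) hVcl hVbal hVcx (mem_of_mem_nhds hVnhd)
    intro e' he'
    have he'P : (e' : WeakDual 𝕜 E) ∈ P := he'
    have h1 : Filter.Tendsto (fun k => e' (U k φ)) atTop (𝓝 (e' (uL φ))) :=
      (e'.continuous.tendsto _).comp (huL φ)
    have h2 : Filter.Tendsto (fun k => e' (U k φ)) atTop (𝓝 (φ (T e'))) := by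
      have h3 : (fun k => e' (U k φ)) = fun k => φ (w k e') :=
        funext fun k => hkey k φ e'
      rw [h3]
      exact (φ.continuous.tendsto _).comp (hT e' he'P)
    rw [tendsto_nhds_unique h1 h2]
    exact hφ _ ⟨e', he'P, rfl⟩
  -- assemble the continuous linear limit map
  let uL' : DualKappa 𝕜 FF →ₗ[𝕜] E :=
    { toFun := uL, map_add' := hadd, map_smul' := hsmul }
  have hucont : Continuous uL := by
    apply continuous_of_continuousAt_zero uL'.toAddMonoidHom
    have h0 : uL 0 = 0 := by
      have := map_zero uL'
      exact this
    rw [ContinuousAt]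
    show Filter.Tendsto uL (𝓝 0) (𝓝 (uL 0))
    rw [h0, Filter.tendsto_def]
    intro s hs
    obtain ⟨K, hK, hKs⟩ := hcont0 s hs
    have hnhd : {φ : DualKappa 𝕜 FF | Set.MapsTo ⇑φ K (Metric.closedBall 0 1)} ∈
        𝓝 (0 : DualKappa 𝕜 FF) :=
      UniformConvergenceCLM.eventually_nhds_zero_mapsTo _ hK
        (Metric.closedBall_mem_nhds (0 : 𝕜) one_pos)
    refine Filter.mem_of_superset hnhd fun φ hφ => ?_
    refine hKs φ fun y hy => ?_
    have := hφ hy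
    rwa [Metric.mem_closedBall, dist_zero_right] at this
  let u : EpsilonProduct 𝕜 FF E := { toLinearMap := uL', cont := hucont }
  -- `U k → u` in the ε-product
  have hUtend : Filter.Tendsto U atTop (𝓝 u) := by
    refine (UniformConvergenceCLM.tendsto_iff_tendstoUniformlyOn _ _ _).mpr ?_
    intro H hH uu huu
    rw [uniformity_eq_comap_nhds_zero E] at huu
    obtain ⟨W0, hW0, hW0sub⟩ := Filter.mem_comap.mp huu
    obtain ⟨W, hWnhd, hWsub, hWcl, -, -⟩ := exists_closed_absConvex_nhd (𝕜 := 𝕜) hW0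
    obtain ⟨N, hN⟩ := claimA H hH W hWnhd
    rw [eventually_atTop]
    refine ⟨N, fun k hk φ hφ => ?_⟩
    apply hW0sub
    show U k φ - u φ ∈ W0
    apply hWsub
    have htm : Filter.Tendsto (fun m => U k φ - U m φ) atTop (𝓝 (U k φ - uL φ)) :=
      tendsto_const_nhds.sub (huL φ)
    apply hWcl.mem_of_tendsto htm
    filter_upwards [eventually_ge_atTop N] with m hm
    exact hN k hk m hm φ hφ
  have h1 : Filter.Tendsto (fun k => S (U k)) atTop (𝓝 (S u)) :=
    (hSemb.continuous.tendsto u).comp hUtend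
  have h2 : (fun k => S (U k)) = psum := funext hSU
  rw [h2] at h1
  exact ⟨u, tendsto_nhds_unique h1 hlim⟩
end

section
/- Let E be a locally convex Hausdorff space and d ∈ ℕ. For every x = (xₖ) in the space s(ℤ^d, E) of E-valued rapidly decreasing sequences, the partial sums Σ_{|n| ≤ k} xₙ φₙ converge to x in s(ℤ^d, E); moreover the error estimate |x − Σ_{|n|≤k} xₙφₙ|_{j,α} ≤ (1+k²)^{−j/2} |x|_{2j,α} holds for all j ∈ ℕ and seminorm indices α. -/
open Filter Topology

/-- Euclidean norm of a multi-integer `m ∈ ℤ^d`. -/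
noncomputable def zNorm {d : ℕ} (m : Fin d → ℤ) : ℝ :=
  Real.sqrt (∑ i, ((m i : ℝ)) ^ 2)

lemma zNorm_nonneg {d : ℕ} (m : Fin d → ℤ) : 0 ≤ zNorm m := Real.sqrt_nonneg _

lemma key_lemma {d : ℕ} (f : (Fin d → ℤ) → ℝ) (hf : ∀ m, 0 ≤ f m) (s t : ℝ)
    (ht : 0 ≤ t) (k : ℕ)
    (hbdd : BddAbove (Set.range fun m => f m * (1 + zNorm m ^ 2) ^ (s + t))) :
    (⨆ m : Fin d → ℤ, (if zNorm m ≤ k then 0 else f m) * (1 + zNorm m ^ 2) ^ s) ≤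
      (1 + (k : ℝ) ^ 2) ^ (-t) * ⨆ m, f m * (1 + zNorm m ^ 2) ^ (s + t) := by
  have hk : (0 : ℝ) < 1 + (k : ℝ) ^ 2 := by positivity
  set S : ℝ := ⨆ m, f m * (1 + zNorm m ^ 2) ^ (s + t) with hS
  have hSnn : 0 ≤ S := by
    have hm : ∀ m, f m * (1 + zNorm m ^ 2) ^ (s + t) ≤ S := fun m => le_ciSup hbdd m
    refine le_trans ?_ (hm Classical.ofNonempty)
    have := hf (Classical.ofNonempty : Fin d → ℤ)
    positivity
  apply ciSup_le
  intro m
  by_cases hc : zNorm m ≤ (k : ℝ)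
  · simp only [if_pos hc, zero_mul]
    positivity
  · push_neg at hc
    simp only [if_neg (not_le.mpr hc)]
    have hz : (0 : ℝ) < 1 + zNorm m ^ 2 := by positivity
    have hle : 1 + (k : ℝ) ^ 2 ≤ 1 + zNorm m ^ 2 := by
      have : (k : ℝ) ^ 2 ≤ zNorm m ^ 2 :=
        pow_le_pow_left₀ (Nat.cast_nonneg k) hc.le 2
      linarith
    have h1 : (1 + zNorm m ^ 2) ^ (-t) ≤ (1 + (k : ℝ) ^ 2) ^ (-t) :=
      Real.rpow_le_rpow_of_nonpos hk hle (neg_nonpos.mpr ht)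
    have h2 : f m * (1 + zNorm m ^ 2) ^ (s + t) ≤ S := le_ciSup hbdd m
    have heq : (1 + zNorm m ^ 2) ^ s =
        (1 + zNorm m ^ 2) ^ (s + t) * (1 + zNorm m ^ 2) ^ (-t) := by
      rw [← Real.rpow_add hz]; ring_nf
    calc f m * (1 + zNorm m ^ 2) ^ s
        = (f m * (1 + zNorm m ^ 2) ^ (s + t)) * (1 + zNorm m ^ 2) ^ (-t) := by
          rw [heq]; ring
      _ ≤ S * (1 + (k : ℝ) ^ 2) ^ (-t) := by
          apply mul_le_mul h2 h1 (by positivity) hSnn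
      _ = (1 + (k : ℝ) ^ 2) ^ (-t) * S := by ring

/-- For every `x = (xₖ)` in the space `s(ℤ^d, E)` of `E`-valued rapidly
decreasing sequences, the partial sums `Σ_{|n| ≤ k} xₙ φₙ` converge to `x` in `s(ℤ^d, E)`,
and the error estimate
`|x − Σ_{|n|≤k} xₙφₙ|_{j,α} ≤ (1+k²)^{−j/2} |x|_{2j,α}` holds for all `j` and `α`. -/
theorem stmt9 {𝕜 E ι : Type*} [RCLike 𝕜] [Nonempty ι]
    [AddCommGroup E] [Module 𝕜 E] [UniformSpace E] [IsUniformAddGroup E]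
    [ContinuousSMul 𝕜 E] [T2Space E] [Module ℝ E] [IsScalarTower ℝ 𝕜 E]
    [LocallyConvexSpace ℝ E]
    (q : SeminormFamily 𝕜 E ι) (hq : WithSeminorms q)
    (d : ℕ)
    -- `x ∈ s(ℤ^d, E)`:
    (x : (Fin d → ℤ) → E)
    (hx : ∀ (j : ℕ) (α : ι), BddAbove (Set.range fun m : Fin d → ℤ =>
      q α (x m) * (1 + zNorm m ^ 2) ^ ((j : ℝ) / 2))) :
    -- convergence of the partial sums in every seminorm of `s(ℤ^d, E)`:
    (∀ (j : ℕ) (α : ι),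
      Tendsto (fun k : ℕ => ⨆ m : Fin d → ℤ,
          q α (if zNorm m ≤ k then 0 else x m) * (1 + zNorm m ^ 2) ^ ((j : ℝ) / 2))
        atTop (𝓝 0)) ∧
    -- error estimate `|x − P_k x|_{j,α} ≤ (1+k²)^{−j/2} |x|_{2j,α}`:
    (∀ (j : ℕ) (α : ι) (k : ℕ),
      (⨆ m : Fin d → ℤ,
          q α (if zNorm m ≤ k then 0 else x m) * (1 + zNorm m ^ 2) ^ ((j : ℝ) / 2)) ≤
        (1 + (k : ℝ) ^ 2) ^ (-(j : ℝ) / 2) *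
          ⨆ m : Fin d → ℤ, q α (x m) * (1 + zNorm m ^ 2) ^ (j : ℝ)) := by
  have hqite : ∀ (α : ι) (c : Prop) [Decidable c] (y : E),
      q α (if c then 0 else y) = if c then 0 else q α (y) := by
    intro α c _ y
    split <;> simp
  constructor
  · -- convergence
    intro j α
    -- upper bound via key_lemma with s = j/2, t = 1/2
    have hb : BddAbove (Set.range fun m : Fin d → ℤ =>
        q α (x m) * (1 + zNorm m ^ 2) ^ ((j : ℝ) / 2 + 1 / 2)) := by
      have := hx (j + 1) α
      convert this using 4 with m
      push_cast; ring_nf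
    set C : ℝ := ⨆ m : Fin d → ℤ,
        q α (x m) * (1 + zNorm m ^ 2) ^ ((j : ℝ) / 2 + 1 / 2) with hC
    have hupper : ∀ k : ℕ,
        (⨆ m : Fin d → ℤ,
          q α (if zNorm m ≤ k then 0 else x m) * (1 + zNorm m ^ 2) ^ ((j : ℝ) / 2)) ≤
          (1 + (k : ℝ) ^ 2) ^ (-(1 / 2 : ℝ)) * C := by
      intro k
      have := key_lemma (fun m => q α (x m)) (fun m => apply_nonneg _ _)
        ((j : ℝ) / 2) (1 / 2) (by norm_num) k hb
      simpa only [hqite] using this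
    have hlower : ∀ k : ℕ, 0 ≤
        (⨆ m : Fin d → ℤ,
          q α (if zNorm m ≤ k then 0 else x m) * (1 + zNorm m ^ 2) ^ ((j : ℝ) / 2)) := by
      intro k
      have hbk : BddAbove (Set.range fun m : Fin d → ℤ =>
          q α (if zNorm m ≤ k then 0 else x m) * (1 + zNorm m ^ 2) ^ ((j : ℝ) / 2)) := by
        obtain ⟨B, hB⟩ := hx j α
        refine ⟨B, ?_⟩
        rintro r ⟨m, rfl⟩
        have : q α (if zNorm m ≤ k then 0 else x m) ≤ q α (x m) := by
          rw [hqite]; split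
          · exact apply_nonneg _ _
          · exact le_refl _
        refine le_trans (mul_le_mul_of_nonneg_right this (by positivity)) ?_
        exact hB ⟨m, rfl⟩
      refine le_trans ?_ (le_ciSup hbk (Classical.ofNonempty : Fin d → ℤ))
      positivity
    have htend : Tendsto (fun k : ℕ => (1 + (k : ℝ) ^ 2) ^ (-(1 / 2 : ℝ)) * C)
        atTop (𝓝 0) := by
      have h1 : Tendsto (fun k : ℕ => 1 + (k : ℝ) ^ 2) atTop atTop := by
        apply tendsto_atTop_add_const_left
        exact (tendsto_pow_atTop (by norm_num)).comp (tendsto_natCast_atTop_atTop (R := ℝ))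
      have h2 : Tendsto (fun k : ℕ => (1 + (k : ℝ) ^ 2) ^ (-(1 / 2 : ℝ))) atTop (𝓝 0) :=
        (tendsto_rpow_neg_atTop (by norm_num)).comp h1
      simpa using h2.mul_const C
    exact squeeze_zero hlower hupper htend
  · -- error estimate
    intro j α k
    have hb : BddAbove (Set.range fun m : Fin d → ℤ =>
        q α (x m) * (1 + zNorm m ^ 2) ^ ((j : ℝ) / 2 + (j : ℝ) / 2)) := by
      have := hx (2 * j) α
      convert this using 4 with m
      push_cast; ring_nf
    have := key_lemma (fun m => q α (x m)) (fun m => apply_nonneg _ _)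
      ((j : ℝ) / 2) ((j : ℝ) / 2) (by positivity) k hb
    simp only [hqite] at this ⊢
    have e2 : (j : ℝ) / 2 + (j : ℝ) / 2 = (j : ℝ) := by ring
    rw [e2] at this
    rw [neg_div]
    exact this
end

section
/- Let E be a sequentially complete locally convex Hausdorff space, f ∈ S(ℝ^d, E) an E-valued Schwartz function, and hₙ the n-th Hermite function for n ∈ ℕ₀^d. Then the product f·hₙ is Pettis-integrable on ℝ^d, i.e., there exists y ∈ E with ⟨e', y⟩ = ∫_{ℝ^d} ⟨e', f(x)⟩ hₙ(x) dx for every e' ∈ E'. -/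
open Filter Topology MeasureTheory

section SmoothLC

variable {d : ℕ} {E : Type*} [AddCommGroup E] [Module ℝ E] [UniformSpace E]

/-- The partial derivative of an `E`-valued function in the `i`-th coordinate direction,
defined via the limit of difference quotients (junk value if the limit does not exist). -/
noncomputable def pd (i : Fin d) (f : (Fin d → ℝ) → E) : (Fin d → ℝ) → E := fun x =>
  letI : Nonempty E := ⟨0⟩
  limUnder (𝓝[≠] (0 : ℝ))
    (fun h : ℝ => h⁻¹ • (f (fun j => x j + if j = i then h else 0) - f x))

/-- `f` has partial derivative `y` at `x` in direction `i`. -/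
def HasPdAt (i : Fin d) (f : (Fin d → ℝ) → E) (x : Fin d → ℝ) (y : E) : Prop :=
  Tendsto (fun h : ℝ => h⁻¹ • (f (fun j => x j + if j = i then h else 0) - f x))
    (𝓝[≠] (0 : ℝ)) (𝓝 y)

/-- Iterated partial derivative along a list of directions. -/
noncomputable def pdIter : List (Fin d) → ((Fin d → ℝ) → E) → ((Fin d → ℝ) → E)
  | [], f => f
  | i :: L, f => pd i (pdIter L f)

/-- `f` is infinitely continuously partially differentiable in the sense of
locally convex-valued calculus: all iterated partial derivatives exist and are continuous. -/
def IsSmoothE (f : (Fin d → ℝ) → E) : Prop :=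
  ∀ L : List (Fin d), Continuous (pdIter L f) ∧
    ∀ (i : Fin d) (x : Fin d → ℝ), HasPdAt i (pdIter L f) x (pd i (pdIter L f) x)

end SmoothLC

/-- The physicists' Hermite polynomials: `H₀ = 1`, `H_{n+1} = 2X·Hₙ − Hₙ'`. -/
noncomputable def physHermite : ℕ → Polynomial ℝ
  | 0 => 1
  | n + 1 => 2 * Polynomial.X * physHermite n - Polynomial.derivative (physHermite n)

/-- The `n`-th Hermite function `hₙ(x) = (2ⁿ n! √π)^{-1/2} Hₙ(x) e^{-x²/2}`. -/
noncomputable def hermiteFun (n : ℕ) (x : ℝ) : ℝ :=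
  ((2 : ℝ) ^ n * n.factorial * Real.sqrt Real.pi) ^ (-(1 : ℝ) / 2) *
    (physHermite n).eval x * Real.exp (-x ^ 2 / 2)

/-- The `d`-dimensional Hermite function `hₙ(x) = Π_k h_{n_k}(x_k)` for `n ∈ ℕ₀^d`. -/
noncomputable def hermiteFunD {d : ℕ} (n : Fin d → ℕ) (x : Fin d → ℝ) : ℝ :=
  ∏ i, hermiteFun (n i) (x i)

/-! ### Auxiliary lemmas -/

lemma stmt13aux_powMulExp_le (m : ℕ) (x : ℝ) :
    |x| ^ m * Real.exp (-x ^ 2 / 2) ≤ 2 ^ m * m.factorial + 1 := by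
  have key : ∀ t : ℝ, 0 ≤ t → t ^ m ≤ m.factorial * Real.exp t := by
    intro t ht
    have h1 : t ^ m / m.factorial ≤ Real.exp t := by
      calc t ^ m / m.factorial
          ≤ ∑ i ∈ Finset.range (m + 1), t ^ i / i.factorial := by
            refine Finset.single_le_sum (f := fun i => t ^ i / i.factorial) ?_ ?_
            · intro i _; positivity
            · exact Finset.self_mem_range_succ m
        _ ≤ Real.exp t := Real.sum_le_exp_of_nonneg ht _
    have hm : (0:ℝ) < m.factorial := by positivity
    calc t ^ m = t ^ m / m.factorial * m.factorial := by field_simp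
      _ ≤ Real.exp t * m.factorial := mul_le_mul_of_nonneg_right h1 hm.le
      _ = m.factorial * Real.exp t := mul_comm _ _
  have hfac : (0:ℝ) ≤ 2 ^ m * m.factorial := by positivity
  by_cases h : |x| ≤ 1
  · have h1 : |x| ^ m ≤ 1 := pow_le_one₀ (abs_nonneg x) h
    have h2 : Real.exp (-x ^ 2 / 2) ≤ 1 := by
      rw [Real.exp_le_one_iff]; nlinarith [sq_nonneg x]
    calc |x| ^ m * Real.exp (-x ^ 2 / 2) ≤ 1 * 1 :=
          mul_le_mul h1 h2 (Real.exp_pos _).le zero_le_one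
      _ = 1 := by norm_num
      _ ≤ 2 ^ m * m.factorial + 1 := by linarith
  · push_neg at h
    have h1 : |x| ^ m ≤ (x ^ 2) ^ m := by
      calc |x| ^ m ≤ (|x| ^ 2) ^ m := by
            refine pow_le_pow_left₀ (abs_nonneg x) ?_ m
            nlinarith
        _ = (x ^ 2) ^ m := by rw [sq_abs]
    have h2 : (x ^ 2) ^ m * Real.exp (-x ^ 2 / 2) ≤ 2 ^ m * m.factorial := by
      have hk := key (x ^ 2 / 2) (by positivity)
      have hexp : Real.exp (x ^ 2 / 2) * Real.exp (-x ^ 2 / 2) = 1 := by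
        rw [← Real.exp_add]; ring_nf; exact Real.exp_zero
      have h3 : (x ^ 2) ^ m = 2 ^ m * (x ^ 2 / 2) ^ m := by
        rw [← mul_pow]; ring_nf
      rw [h3]
      calc 2 ^ m * (x ^ 2 / 2) ^ m * Real.exp (-x ^ 2 / 2)
          ≤ 2 ^ m * (m.factorial * Real.exp (x ^ 2 / 2)) * Real.exp (-x ^ 2 / 2) := by
            gcongr
        _ = 2 ^ m * m.factorial * (Real.exp (x ^ 2 / 2) * Real.exp (-x ^ 2 / 2)) := by ring
        _ = 2 ^ m * m.factorial := by rw [hexp, mul_one]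
    calc |x| ^ m * Real.exp (-x ^ 2 / 2) ≤ (x ^ 2) ^ m * Real.exp (-x ^ 2 / 2) :=
          mul_le_mul_of_nonneg_right h1 (Real.exp_pos _).le
      _ ≤ 2 ^ m * m.factorial := h2
      _ ≤ 2 ^ m * m.factorial + 1 := by linarith

lemma stmt13aux_hermiteFun_bound (n : ℕ) : ∃ B : ℝ, 0 ≤ B ∧ ∀ x, |hermiteFun n x| ≤ B := by
  set P := physHermite n
  set c : ℝ := ((2 : ℝ) ^ n * n.factorial * Real.sqrt Real.pi) ^ (-(1 : ℝ) / 2)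
  refine ⟨|c| * ∑ i ∈ Finset.range (P.natDegree + 1), |P.coeff i| * (2 ^ i * i.factorial + 1),
    by positivity, fun x => ?_⟩
  have heval : |P.eval x| ≤ ∑ i ∈ Finset.range (P.natDegree + 1), |P.coeff i| * |x| ^ i := by
    rw [Polynomial.eval_eq_sum_range]
    refine (Finset.abs_sum_le_sum_abs _ _).trans (le_of_eq ?_)
    refine Finset.sum_congr rfl fun i _ => ?_
    rw [abs_mul, abs_pow]
  have hx : |hermiteFun n x| = |c| * (|P.eval x| * Real.exp (-x ^ 2 / 2)) := by
    unfold hermiteFun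
    rw [abs_mul, abs_mul, abs_of_pos (Real.exp_pos _), mul_assoc]
  rw [hx]
  refine mul_le_mul_of_nonneg_left ?_ (abs_nonneg c)
  calc |P.eval x| * Real.exp (-x ^ 2 / 2)
      ≤ (∑ i ∈ Finset.range (P.natDegree + 1), |P.coeff i| * |x| ^ i) *
          Real.exp (-x ^ 2 / 2) :=
        mul_le_mul_of_nonneg_right heval (Real.exp_pos _).le
    _ = ∑ i ∈ Finset.range (P.natDegree + 1),
          |P.coeff i| * (|x| ^ i * Real.exp (-x ^ 2 / 2)) := by
        rw [Finset.sum_mul]; exact Finset.sum_congr rfl fun i _ => by ring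
    _ ≤ ∑ i ∈ Finset.range (P.natDegree + 1), |P.coeff i| * (2 ^ i * i.factorial + 1) := by
        refine Finset.sum_le_sum fun i _ => ?_
        exact mul_le_mul_of_nonneg_left (stmt13aux_powMulExp_le i x) (abs_nonneg _)

lemma stmt13aux_hermiteFunD_bound {d : ℕ} (n : Fin d → ℕ) :
    ∃ B : ℝ, 0 ≤ B ∧ ∀ x, |hermiteFunD n x| ≤ B := by
  choose B hB0 hB using fun i => stmt13aux_hermiteFun_bound (n i)
  refine ⟨∏ i, B i, Finset.prod_nonneg fun i _ => hB0 i, fun x => ?_⟩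
  rw [hermiteFunD, Finset.abs_prod]
  exact Finset.prod_le_prod (fun i _ => abs_nonneg _) fun i _ => hB i (x i)

lemma stmt13aux_hermiteFun_continuous (n : ℕ) : Continuous (hermiteFun n) := by
  unfold hermiteFun
  exact (continuous_const.mul (physHermite n).continuous).mul
    (Real.continuous_exp.comp (by fun_prop))

lemma stmt13aux_hermiteFunD_continuous {d : ℕ} (n : Fin d → ℕ) :
    Continuous (hermiteFunD n) :=
  continuous_finset_prod _ fun i _ =>
    (stmt13aux_hermiteFun_continuous (n i)).comp (continuous_apply i)

lemma stmt13aux_integrable_psi (d : ℕ) :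
    Integrable (fun x : Fin d → ℝ => (1 + ∑ i, x i ^ 2) ^ (-((d : ℝ) + 1) / 2)) := by
  have hd : (Module.finrank ℝ (Fin d → ℝ) : ℝ) < (d : ℝ) + 1 := by
    simp [Module.finrank_fintype_fun_eq_card]
  have hint := integrable_rpow_neg_one_add_norm_sq (E := Fin d → ℝ) (μ := volume) hd
  refine hint.mono' ?_ (ae_of_all _ fun x => ?_)
  · refine Continuous.rpow_const ?_ (fun x => Or.inl ?_) |>.aestronglyMeasurable
    · exact continuous_const.add (continuous_finset_sum _ fun i _ =>
        ((continuous_apply i).pow 2))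
    · have h0 : (0:ℝ) ≤ ∑ i, x i ^ 2 := Finset.sum_nonneg fun i _ => sq_nonneg _
      positivity
  · have hsum : (0:ℝ) ≤ ∑ i, x i ^ 2 := Finset.sum_nonneg fun i _ => sq_nonneg _
    have h1 : (0:ℝ) < 1 + ‖x‖ ^ 2 := by positivity
    have hnorm : ‖x‖ ^ 2 ≤ ∑ i, x i ^ 2 := by
      have hle : ‖x‖ ≤ Real.sqrt (∑ i, x i ^ 2) := by
        rw [pi_norm_le_iff_of_nonneg (Real.sqrt_nonneg _)]
        intro i
        rw [Real.norm_eq_abs, ← Real.sqrt_sq_eq_abs]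
        exact Real.sqrt_le_sqrt (Finset.single_le_sum (fun j _ => sq_nonneg (x j))
          (Finset.mem_univ i))
      calc ‖x‖ ^ 2 ≤ Real.sqrt (∑ i, x i ^ 2) ^ 2 :=
            pow_le_pow_left₀ (norm_nonneg x) hle 2
        _ = ∑ i, x i ^ 2 := Real.sq_sqrt hsum
    have hneg : -((d : ℝ) + 1) / 2 ≤ 0 := by
      have h2 : (0:ℝ) ≤ d := Nat.cast_nonneg d
      linarith
    rw [Real.norm_eq_abs, abs_of_pos (Real.rpow_pos_of_pos (by positivity) _)]
    exact Real.rpow_le_rpow_of_nonpos h1 (by linarith) hneg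

/-! ### Dyadic grids -/

noncomputable def stmt13rnd (d k : ℕ) (x : Fin d → ℝ) : Fin d → ℝ :=
  fun i => (⌊(2:ℝ) ^ k * x i⌋ : ℝ) / (2:ℝ) ^ k

def stmt13boxx (d k : ℕ) : Set (Fin d → ℝ) := Set.univ.pi fun _ => Set.Ico (-(k:ℝ)) (k:ℝ)

noncomputable def stmt13grd (d k : ℕ) : Finset (Fin d → ℤ) :=
  Fintype.piFinset fun _ => Finset.Ico (-((k : ℤ) * 2 ^ k)) ((k : ℤ) * 2 ^ k)

def stmt13cel (d k : ℕ) (m : Fin d → ℤ) : Set (Fin d → ℝ) :=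
  Set.univ.pi fun i => Set.Ico ((m i : ℝ) / 2 ^ k) (((m i : ℝ) + 1) / 2 ^ k)

noncomputable def stmt13ptt (d k : ℕ) (m : Fin d → ℤ) : Fin d → ℝ :=
  fun i => (m i : ℝ) / 2 ^ k

lemma stmt13_two_pow_pos (k : ℕ) : (0:ℝ) < 2 ^ k := by positivity

lemma stmt13_mem_cel_iff {d k : ℕ} {m : Fin d → ℤ} {x : Fin d → ℝ} :
    x ∈ stmt13cel d k m ↔ ∀ i, ⌊(2:ℝ) ^ k * x i⌋ = m i := by
  simp only [stmt13cel, Set.mem_pi, Set.mem_univ, forall_true_left, Set.mem_Ico]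
  refine forall_congr' fun i => ?_
  rw [Int.floor_eq_iff, div_le_iff₀ (stmt13_two_pow_pos k), lt_div_iff₀ (stmt13_two_pow_pos k),
    mul_comm ((2:ℝ) ^ k) (x i)]

lemma stmt13_floor_mem_grd {d k : ℕ} {x : Fin d → ℝ} (hx : x ∈ stmt13boxx d k) :
    (fun i => ⌊(2:ℝ) ^ k * x i⌋) ∈ stmt13grd d k := by
  rw [stmt13grd, Fintype.mem_piFinset]
  intro i
  have hxi := hx i (Set.mem_univ i)
  rw [Set.mem_Ico] at hxi
  rw [Finset.mem_Ico]
  constructor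
  · rw [Int.le_floor]
    push_cast
    nlinarith [stmt13_two_pow_pos k, hxi.1]
  · rw [Int.floor_lt]
    push_cast
    nlinarith [stmt13_two_pow_pos k, hxi.2]

lemma stmt13_mem_boxx_of_mem_cel {d k : ℕ} {m : Fin d → ℤ} {x : Fin d → ℝ}
    (hm : m ∈ stmt13grd d k) (hx : x ∈ stmt13cel d k m) : x ∈ stmt13boxx d k := by
  rw [stmt13grd, Fintype.mem_piFinset] at hm
  intro i _
  have hmi := hm i
  rw [Finset.mem_Ico] at hmi
  have hxi := hx i (Set.mem_univ i)
  rw [Set.mem_Ico] at hxi ⊢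
  have h1 : ((-((k : ℤ) * 2 ^ k) : ℤ) : ℝ) ≤ (m i : ℝ) := Int.cast_le.mpr hmi.1
  have h2 : ((m i : ℝ) + 1) ≤ (((k : ℤ) * 2 ^ k : ℤ) : ℝ) := by
    have h3 : m i + 1 ≤ (k : ℤ) * 2 ^ k := hmi.2
    exact_mod_cast Int.cast_le.mpr h3
  push_cast at h1 h2
  rw [div_le_iff₀ (stmt13_two_pow_pos k)] at hxi
  rw [lt_div_iff₀ (stmt13_two_pow_pos k)] at hxi
  constructor
  · nlinarith [stmt13_two_pow_pos k, hxi.1]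
  · nlinarith [stmt13_two_pow_pos k, hxi.2]

lemma stmt13_step_eq {d : ℕ} (g : (Fin d → ℝ) → ℝ) (k : ℕ) (x : Fin d → ℝ) :
    (stmt13boxx d k).indicator (fun x => g (stmt13rnd d k x)) x
      = ∑ m ∈ stmt13grd d k, (stmt13cel d k m).indicator (fun _ => g (stmt13ptt d k m)) x := by
  by_cases hx : x ∈ stmt13boxx d k
  · rw [Set.indicator_of_mem hx]
    have hm0 : (fun i => ⌊(2:ℝ) ^ k * x i⌋) ∈ stmt13grd d k := stmt13_floor_mem_grd hx
    rw [Finset.sum_eq_single_of_mem _ hm0 ?_]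
    · rw [Set.indicator_of_mem (stmt13_mem_cel_iff.mpr fun i => rfl)]
      rfl
    · intro m _ hne
      apply Set.indicator_of_notMem
      intro hxm
      exact hne (funext fun i => (stmt13_mem_cel_iff.mp hxm i).symm)
  · rw [Set.indicator_of_notMem hx]
    symm
    refine Finset.sum_eq_zero fun m hm => ?_
    apply Set.indicator_of_notMem
    intro hxm
    exact hx (stmt13_mem_boxx_of_mem_cel hm hxm)

lemma stmt13_cel_measurable {d k : ℕ} (m : Fin d → ℤ) : MeasurableSet (stmt13cel d k m) :=
  MeasurableSet.univ_pi fun _ => measurableSet_Ico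

lemma stmt13_boxx_measurable {d k : ℕ} : MeasurableSet (stmt13boxx d k) :=
  MeasurableSet.univ_pi fun _ => measurableSet_Ico

lemma stmt13_cel_volume {d k : ℕ} (m : Fin d → ℤ) :
    volume (stmt13cel d k m) = ENNReal.ofReal ((((2:ℝ) ^ k)⁻¹) ^ d) := by
  rw [stmt13cel, volume_pi_pi]
  have h : ∀ i : Fin d, volume (Set.Ico ((m i : ℝ) / 2 ^ k) (((m i : ℝ) + 1) / 2 ^ k))
      = ENNReal.ofReal (((2:ℝ) ^ k)⁻¹) := by
    intro i
    rw [Real.volume_Ico]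
    congr 1
    field_simp
    ring
  simp only [h]
  rw [Finset.prod_const, Finset.card_univ, Fintype.card_fin,
    ← ENNReal.ofReal_pow (by positivity)]

lemma stmt13_integrable_step {d : ℕ} (g : (Fin d → ℝ) → ℝ) (k : ℕ) :
    Integrable (fun x => (stmt13boxx d k).indicator (fun x => g (stmt13rnd d k x)) x) := by
  have hstep : (fun x => (stmt13boxx d k).indicator (fun x => g (stmt13rnd d k x)) x)
      = fun x => ∑ m ∈ stmt13grd d k,
          (stmt13cel d k m).indicator (fun _ => g (stmt13ptt d k m)) x :=
    funext fun x => stmt13_step_eq g k x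
  rw [hstep]
  refine integrable_finset_sum _ fun m _ => ?_
  rw [integrable_indicator_iff (stmt13_cel_measurable m)]
  exact integrableOn_const (by rw [stmt13_cel_volume m]; exact ENNReal.ofReal_ne_top)

lemma stmt13_integral_step {d : ℕ} (g : (Fin d → ℝ) → ℝ) (k : ℕ) :
    ∫ x, (stmt13boxx d k).indicator (fun x => g (stmt13rnd d k x)) x
      = ∑ m ∈ stmt13grd d k, (((2:ℝ) ^ k)⁻¹) ^ d * g (stmt13ptt d k m) := by
  have hstep : (fun x => (stmt13boxx d k).indicator (fun x => g (stmt13rnd d k x)) x)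
      = fun x => ∑ m ∈ stmt13grd d k,
          (stmt13cel d k m).indicator (fun _ => g (stmt13ptt d k m)) x :=
    funext fun x => stmt13_step_eq g k x
  rw [hstep, integral_finset_sum]
  · refine Finset.sum_congr rfl fun m _ => ?_
    rw [integral_indicator_const _ (stmt13_cel_measurable m), measureReal_def, stmt13_cel_volume m,
      ENNReal.toReal_ofReal (by positivity), smul_eq_mul]
  · intro m _
    rw [integrable_indicator_iff (stmt13_cel_measurable m)]
    exact integrableOn_const (by rw [stmt13_cel_volume m]; exact ENNReal.ofReal_ne_top)

lemma stmt13_rnd_measurable (d k : ℕ) : Measurable (stmt13rnd d k) :=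
  measurable_pi_lambda _ fun i =>
    (measurable_of_countable (fun z : ℤ => ((z:ℝ) / 2 ^ k))).comp
      (Measurable.floor (by fun_prop))

lemma stmt13_rnd_le {d k : ℕ} (x : Fin d → ℝ) (i : Fin d) : stmt13rnd d k x i ≤ x i := by
  rw [stmt13rnd, div_le_iff₀ (stmt13_two_pow_pos k), mul_comm]
  exact Int.floor_le _

lemma stmt13_lt_rnd_add {d k : ℕ} (x : Fin d → ℝ) (i : Fin d) :
    x i < stmt13rnd d k x i + ((2:ℝ) ^ k)⁻¹ := by
  have h := Int.lt_floor_add_one ((2:ℝ) ^ k * x i)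
  rw [stmt13rnd]
  rw [show (⌊(2:ℝ) ^ k * x i⌋ : ℝ) / 2 ^ k + ((2:ℝ) ^ k)⁻¹
      = ((⌊(2:ℝ) ^ k * x i⌋ : ℝ) + 1) / 2 ^ k by field_simp]
  rw [lt_div_iff₀ (stmt13_two_pow_pos k), mul_comm]
  exact h

lemma stmt13_rnd_tendsto {d : ℕ} (x : Fin d → ℝ) :
    Tendsto (fun k => stmt13rnd d k x) atTop (𝓝 x) := by
  rw [tendsto_pi_nhds]
  intro i
  have hinv : Tendsto (fun k : ℕ => ((2:ℝ) ^ k)⁻¹) atTop (𝓝 0) :=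
    tendsto_inv_atTop_zero.comp (tendsto_pow_atTop_atTop_of_one_lt one_lt_two)
  have hlow : Tendsto (fun k : ℕ => x i - ((2:ℝ) ^ k)⁻¹) atTop (𝓝 (x i)) := by
    have h := Tendsto.sub (tendsto_const_nhds : Tendsto (fun _ : ℕ => x i) atTop (𝓝 (x i))) hinv
    simpa using h
  refine tendsto_of_tendsto_of_tendsto_of_le_of_le hlow tendsto_const_nhds
    (fun k => ?_) (fun k => stmt13_rnd_le x i)
  have := stmt13_lt_rnd_add (k := k) x i
  linarith

lemma stmt13_mem_boxx_eventually {d : ℕ} (x : Fin d → ℝ) :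
    ∀ᶠ k : ℕ in atTop, x ∈ stmt13boxx d k := by
  have h1 : ∀ i : Fin d, ∀ᶠ k : ℕ in atTop, |x i| < (k : ℝ) := fun i =>
    (tendsto_natCast_atTop_atTop (R := ℝ)).eventually_gt_atTop |x i|
  refine (eventually_all.mpr h1).mono fun k hk => ?_
  intro i _
  have h2 := abs_lt.mp (hk i)
  exact ⟨by linarith [h2.1], h2.2⟩

set_option maxHeartbeats 1000000 in
/-- Let `E` be a sequentially complete locally convex Hausdorff space,
`f ∈ S(ℝ^d, E)` an `E`-valued Schwartz function and `hₙ` the `n`-th Hermite function,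
`n ∈ ℕ₀^d`.  Then `f·hₙ` is Pettis-integrable on `ℝ^d`: there exists `y ∈ E` with
`⟨e', y⟩ = ∫ ⟨e', f(x)⟩ hₙ(x) dx` for every `e' ∈ E'`. -/
theorem stmt13 {E : Type*}
    [AddCommGroup E] [Module ℝ E] [UniformSpace E] [IsUniformAddGroup E]
    [ContinuousSMul ℝ E] [T2Space E] [LocallyConvexSpace ℝ E]
    -- `E` is sequentially complete:
    (hEsc : ∀ x : ℕ → E, CauchySeq x → ∃ l, Tendsto x atTop (𝓝 l))
    (d : ℕ) (f : (Fin d → ℝ) → E)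
    -- `f ∈ S(ℝ^d, E)`: `f` is smooth and all derivatives decay rapidly:
    (hsmooth : IsSmoothE f)
    (hdecay : ∀ (l : ℕ) (p : Seminorm ℝ E), Continuous p → ∃ C : ℝ,
      ∀ L : List (Fin d), L.length ≤ l → ∀ x : Fin d → ℝ,
        p (pdIter L f x) * (1 + ∑ i, x i ^ 2) ^ ((l : ℝ) / 2) ≤ C)
    (n : Fin d → ℕ) :
    ∃ y : E,
      (∀ e' : E →L[ℝ] ℝ, Integrable (fun x => e' (f x) * hermiteFunD n x)) ∧
      (∀ e' : E →L[ℝ] ℝ, e' y = ∫ x : Fin d → ℝ, e' (f x) * hermiteFunD n x) := by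
  classical
  have hfc : Continuous f := by simpa [pdIter] using (hsmooth []).1
  set G : (Fin d → ℝ) → E := fun x => hermiteFunD n x • f x with hGdef
  have hGc : Continuous G := (stmt13aux_hermiteFunD_continuous n).smul hfc
  set Ψ : (Fin d → ℝ) → ℝ := fun x => (1 + ∑ i, x i ^ 2) ^ (-((d:ℝ) + 1) / 2) with hΨdef
  have hΨint : Integrable Ψ := stmt13aux_integrable_psi d
  have hbase_pos : ∀ x : Fin d → ℝ, (0:ℝ) < 1 + ∑ i, x i ^ 2 := fun x => by
    have h0 : (0:ℝ) ≤ ∑ i, x i ^ 2 := Finset.sum_nonneg fun i _ => sq_nonneg _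
    linarith
  have hΨnn : ∀ x, 0 ≤ Ψ x := fun x => (Real.rpow_pos_of_pos (hbase_pos x) _).le
  set t : ℝ := ((d:ℝ) + 1) / 2 with htdef
  have ht0 : 0 ≤ t := by
    have h0 : (0:ℝ) ≤ d := Nat.cast_nonneg d
    rw [htdef]; linarith
  have hΨeq : ∀ x : Fin d → ℝ, Ψ x = ((1 + ∑ i, x i ^ 2) ^ t)⁻¹ := fun x => by
    rw [hΨdef, htdef, ← Real.rpow_neg (hbase_pos x).le, neg_div]
  -- shift bound
  have hΨshift : ∀ (k : ℕ) (x : Fin d → ℝ),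
      Ψ (stmt13rnd d k x) ≤ (2 + 2 * (d:ℝ)) ^ t * Ψ x := by
    intro k x
    set r := stmt13rnd d k x with hrdef
    have hco : ∀ i, r i ≤ x i ∧ x i < r i + 1 := by
      intro i
      refine ⟨stmt13_rnd_le x i, ?_⟩
      have h1 := stmt13_lt_rnd_add (k := k) x i
      have h2 : ((2:ℝ) ^ k)⁻¹ ≤ 1 := by
        rw [inv_le_one_iff₀]
        right
        exact one_le_pow₀ one_le_two
      linarith
    have hsum : 1 + ∑ i, x i ^ 2 ≤ (2 + 2 * (d:ℝ)) * (1 + ∑ i, r i ^ 2) := by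
      have h1 : ∀ i, x i ^ 2 ≤ 2 * r i ^ 2 + 2 := by
        intro i
        have hδ0 : 0 ≤ x i - r i := sub_nonneg.2 (hco i).1
        have hδ1 : x i - r i < 1 := by linarith [(hco i).2]
        have hδsq : (x i - r i) ^ 2 ≤ 1 := by nlinarith
        nlinarith [sq_nonneg (x i - 2 * r i)]
      have h2 : ∑ i, x i ^ 2 ≤ ∑ i, (2 * r i ^ 2 + 2) :=
        Finset.sum_le_sum fun i _ => h1 i
      have h3 : ∑ i, (2 * r i ^ 2 + 2 : ℝ) = 2 * ∑ i, r i ^ 2 + 2 * d := by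
        rw [Finset.sum_add_distrib, Finset.sum_const, Finset.card_univ, Fintype.card_fin,
          ← Finset.mul_sum]
        push_cast
        ring
      have h4 : (0:ℝ) ≤ ∑ i, r i ^ 2 := Finset.sum_nonneg fun i _ => sq_nonneg _
      have h5 : (0:ℝ) ≤ d := Nat.cast_nonneg d
      nlinarith
    have hA := hbase_pos r
    have hB := hbase_pos x
    have hpow : (1 + ∑ i, x i ^ 2) ^ t ≤ (2 + 2 * (d:ℝ)) ^ t * (1 + ∑ i, r i ^ 2) ^ t := by
      rw [← Real.mul_rpow (by positivity) (by positivity)]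
      exact Real.rpow_le_rpow hB.le hsum ht0
    rw [hΨeq, hΨeq]
    have hApos : (0:ℝ) < (1 + ∑ i, r i ^ 2) ^ t := Real.rpow_pos_of_pos hA _
    have hBpos : (0:ℝ) < (1 + ∑ i, x i ^ 2) ^ t := Real.rpow_pos_of_pos hB _
    rw [inv_eq_one_div, inv_eq_one_div, mul_one_div, div_le_div_iff₀ hApos hBpos, one_mul]
    exact hpow
  -- decay of p ∘ G
  have hdecayG : ∀ p : Seminorm ℝ E, Continuous p →
      ∃ C : ℝ, 0 ≤ C ∧ ∀ x, p (G x) ≤ C * Ψ x := by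
    intro p hp
    obtain ⟨B, hB0, hB⟩ := stmt13aux_hermiteFunD_bound n
    obtain ⟨C, hC⟩ := hdecay (d + 1) p hp
    have hC0 : 0 ≤ C := by
      have h1 := hC [] (by simp) 0
      have h2 : (0:ℝ) ≤ p (pdIter [] f 0) *
          (1 + ∑ i, (0 : Fin d → ℝ) i ^ 2) ^ (((d + 1 : ℕ) : ℝ) / 2) :=
        mul_nonneg (apply_nonneg p _) (Real.rpow_nonneg (hbase_pos 0).le _)
      linarith
    refine ⟨B * C, mul_nonneg hB0 hC0, fun x => ?_⟩
    have hfx : p (f x) ≤ C * Ψ x := by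
      have h1 := hC [] (by simp) x
      have h2 : p (pdIter [] f x) = p (f x) := rfl
      have h3 : (((d + 1 : ℕ) : ℝ) / 2) = t := by rw [htdef]; push_cast; ring
      rw [h2, h3] at h1
      have hw : (0:ℝ) < (1 + ∑ i, x i ^ 2) ^ t := Real.rpow_pos_of_pos (hbase_pos x) _
      rw [hΨeq, ← div_eq_mul_inv, le_div_iff₀ hw]
      exact h1
    have h4 : p (G x) = ‖hermiteFunD n x‖ * p (f x) := by
      rw [hGdef]
      exact map_smul_eq_mul p _ _
    rw [h4, Real.norm_eq_abs]
    calc |hermiteFunD n x| * p (f x) ≤ B * (C * Ψ x) :=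
          mul_le_mul (hB x) hfx (apply_nonneg p _) hB0
      _ = B * C * Ψ x := by ring
  -- the Riemann sums
  set y : ℕ → E := fun k => ∑ m ∈ stmt13grd d k,
      ((((2:ℝ) ^ k)⁻¹) ^ d) • G (stmt13ptt d k m) with hydef
  -- main estimate packaged per continuous seminorm
  have hMain : ∀ p : Seminorm ℝ E, Continuous p → ∃ I : ℕ → ℝ,
      Tendsto I atTop (𝓝 0) ∧
      ∀ φ : E →ₗ[ℝ] ℝ, (∀ u, |φ u| ≤ p u) →
        Integrable (fun x => φ (G x)) ∧ ∀ k, |φ (y k) - ∫ x, φ (G x)| ≤ I k := by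
    intro p hp
    obtain ⟨C, hC0, hCp⟩ := hdecayG p hp
    set K : ℝ := C + C * (2 + 2 * (d:ℝ)) ^ t with hKdef
    have hCK : C ≤ K := by
      have h0 : 0 ≤ C * (2 + 2 * (d:ℝ)) ^ t :=
        mul_nonneg hC0 (Real.rpow_nonneg (by positivity) _)
      rw [hKdef]; linarith
    set Pk : ℕ → (Fin d → ℝ) → ℝ := fun k =>
      (stmt13boxx d k).piecewise (fun x => p (G x - G (stmt13rnd d k x))) (fun x => p (G x))
      with hPdef
    have hPk_nn : ∀ k x, 0 ≤ Pk k x := by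
      intro k x
      simp only [hPdef]
      by_cases hx : x ∈ stmt13boxx d k
      · rw [Set.piecewise_eq_of_mem _ _ _ hx]; exact apply_nonneg p _
      · rw [Set.piecewise_eq_of_notMem _ _ _ hx]; exact apply_nonneg p _
    have hPk_le : ∀ k x, Pk k x ≤ K * Ψ x := by
      intro k x
      simp only [hPdef]
      by_cases hx : x ∈ stmt13boxx d k
      · rw [Set.piecewise_eq_of_mem _ _ _ hx]
        calc p (G x - G (stmt13rnd d k x)) ≤ p (G x) + p (G (stmt13rnd d k x)) :=
              map_sub_le_add p _ _
          _ ≤ C * Ψ x + C * ((2 + 2 * (d:ℝ)) ^ t * Ψ x) :=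
              add_le_add (hCp x)
                ((hCp _).trans (mul_le_mul_of_nonneg_left (hΨshift k x) hC0))
          _ = K * Ψ x := by rw [hKdef]; ring
      · rw [Set.piecewise_eq_of_notMem _ _ _ hx]
        exact (hCp x).trans (mul_le_mul_of_nonneg_right hCK (hΨnn x))
    have hPk_meas : ∀ k, AEStronglyMeasurable (Pk k) volume := by
      intro k
      simp only [hPdef]
      have h1 : Measurable fun x => p (G x - G (stmt13rnd d k x)) := by
        have hc : Continuous fun q : (Fin d → ℝ) × (Fin d → ℝ) => p (G q.1 - G q.2) :=
          hp.comp ((hGc.comp continuous_fst).sub (hGc.comp continuous_snd))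
        exact hc.measurable.comp (measurable_id.prodMk (stmt13_rnd_measurable d k))
      have h2 : Measurable fun x => p (G x) := (hp.comp hGc).measurable
      exact (Measurable.piecewise stmt13_boxx_measurable h1 h2).aestronglyMeasurable
    have hPk_int : ∀ k, Integrable (Pk k) := fun k =>
      (hΨint.const_mul K).mono' (hPk_meas k)
        (ae_of_all _ fun x => by
          rw [Real.norm_eq_abs, abs_of_nonneg (hPk_nn k x)]; exact hPk_le k x)
    have hlim : ∀ x, Tendsto (fun k => Pk k x) atTop (𝓝 0) := by
      intro x
      have hc : Continuous fun z => p (G x - G z) := hp.comp (continuous_const.sub hGc)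
      have h1 : Tendsto (fun k => p (G x - G (stmt13rnd d k x))) atTop (𝓝 0) := by
        have h2 := (hc.tendsto x).comp (stmt13_rnd_tendsto x)
        simpa [sub_self, map_zero, Function.comp_def] using h2
      refine h1.congr' ?_
      filter_upwards [stmt13_mem_boxx_eventually x] with k hk
      simp only [hPdef]
      exact (Set.piecewise_eq_of_mem (stmt13boxx d k)
        (fun x => p (G x - G (stmt13rnd d k x))) (fun x => p (G x)) hk).symm
    have hI0 : Tendsto (fun k => ∫ x, Pk k x) atTop (𝓝 0) := by
      have h := tendsto_integral_of_dominated_convergence (μ := volume)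
        (F := Pk) (f := fun _ => (0:ℝ)) (fun x => K * Ψ x) hPk_meas (hΨint.const_mul K)
        (fun k => ae_of_all _ fun x => by
          rw [Real.norm_eq_abs, abs_of_nonneg (hPk_nn k x)]; exact hPk_le k x)
        (ae_of_all _ fun x => hlim x)
      simpa using h
    refine ⟨fun k => ∫ x, Pk k x, hI0, ?_⟩
    intro φ hφ
    have hφc : Continuous φ := by
      rw [continuous_iff_continuousAt]
      intro x₀
      rw [ContinuousAt, tendsto_iff_dist_tendsto_zero]
      have hs : Tendsto (fun z : E => p (z - x₀)) (𝓝 x₀) (𝓝 0) := by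
        have h1 : Tendsto (fun z : E => z - x₀) (𝓝 x₀) (𝓝 (x₀ - x₀)) :=
          tendsto_id.sub tendsto_const_nhds
        rw [sub_self] at h1
        have h2 := (hp.tendsto 0).comp h1
        simpa [map_zero, Function.comp_def] using h2
      refine squeeze_zero (fun z => dist_nonneg) (fun z => ?_) hs
      rw [Real.dist_eq, ← map_sub φ]
      exact hφ _
    have hφG_int : Integrable fun x => φ (G x) :=
      (hΨint.const_mul C).mono' ((hφc.comp hGc).aestronglyMeasurable)
        (ae_of_all _ fun x => by rw [Real.norm_eq_abs]; exact (hφ _).trans (hCp x))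
    refine ⟨hφG_int, fun k => ?_⟩
    have hyu : φ (y k) = ∫ x, (stmt13boxx d k).indicator
        (fun x => φ (G (stmt13rnd d k x))) x := by
      have h5 := stmt13_integral_step (fun z => φ (G z)) k
      rw [h5]
      simp only [hydef, map_sum, _root_.map_smul, smul_eq_mul]
    have hu_int : Integrable fun x => (stmt13boxx d k).indicator
        (fun x => φ (G (stmt13rnd d k x))) x := stmt13_integrable_step (fun z => φ (G z)) k
    have hmono : ∀ x, |(stmt13boxx d k).indicator (fun x => φ (G (stmt13rnd d k x))) x
        - φ (G x)| ≤ Pk k x := by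
      intro x
      simp only [hPdef]
      by_cases hx : x ∈ stmt13boxx d k
      · rw [Set.indicator_of_mem hx, Set.piecewise_eq_of_mem _ _ _ hx, ← map_sub φ]
        exact (hφ _).trans (map_sub_rev p _ _).le
      · rw [Set.indicator_of_notMem hx, Set.piecewise_eq_of_notMem _ _ _ hx,
          zero_sub, abs_neg]
        exact hφ _
    rw [hyu, ← integral_sub hu_int hφG_int]
    refine le_trans ?_ (integral_mono (hu_int.sub hφG_int).abs (hPk_int k) hmono)
    simpa [Real.norm_eq_abs] using
      norm_integral_le_integral_norm (μ := volume)
        (f := fun x => (stmt13boxx d k).indicator (fun x => φ (G (stmt13rnd d k x))) x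
          - φ (G x))
  -- Hahn-Banach
  have hHB : ∀ (p : Seminorm ℝ E) (v : E),
      ∃ φ : E →ₗ[ℝ] ℝ, (∀ u, |φ u| ≤ p u) ∧ φ v = p v := by
    intro p v
    by_cases hv : v = 0
    · exact ⟨0, fun u => by simp [apply_nonneg], by simp [hv]⟩
    · have H : ∀ c : ℝ, c • v = 0 → c • (p v : ℝ) = 0 := by
        intro c hc
        rcases smul_eq_zero.mp hc with h | h
        · rw [h, zero_smul]
        · exact absurd h hv
      have hle : ∀ z : (LinearPMap.mkSpanSingleton' (σ := RingHom.id ℝ) v (p v : ℝ) H).domain,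
          (LinearPMap.mkSpanSingleton' (σ := RingHom.id ℝ) v (p v : ℝ) H) z ≤ p z := by
        rintro ⟨w, hw⟩
        have hw' := hw
        rw [LinearPMap.domain_mkSpanSingleton] at hw'
        rcases Submodule.mem_span_singleton.mp hw' with ⟨c, hc⟩
        subst hc
        rw [LinearPMap.mkSpanSingleton'_apply]
        have hpz : p (((⟨c • v, hw⟩ :
            (LinearPMap.mkSpanSingleton' (σ := RingHom.id ℝ) v (p v : ℝ) H).domain)) : E) = |c| * p v := by
          rw [show (((⟨c • v, hw⟩ :
            (LinearPMap.mkSpanSingleton' (σ := RingHom.id ℝ) v (p v : ℝ) H).domain)) : E) = c • v from rfl,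
            map_smul_eq_mul, Real.norm_eq_abs]
        rw [hpz, smul_eq_mul]
        exact mul_le_mul_of_nonneg_right (le_abs_self c) (apply_nonneg p v)
      obtain ⟨φ, hφ1, hφ2⟩ := exists_extension_of_le_sublinear
        (LinearPMap.mkSpanSingleton' (σ := RingHom.id ℝ) v (p v : ℝ) H) p
        (fun c hc x => by rw [map_smul_eq_mul, Real.norm_eq_abs, abs_of_pos hc])
        (map_add_le_add p) hle
      refine ⟨φ, fun u => ?_, ?_⟩
      · rw [abs_le]
        constructor
        · have h6 := hφ2 (-u)
          rw [map_neg, map_neg_eq_map] at h6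
          linarith
        · exact hφ2 u
      · have hvmem : v ∈ (LinearPMap.mkSpanSingleton' (σ := RingHom.id ℝ) v (p v : ℝ) H).domain := by
          rw [LinearPMap.domain_mkSpanSingleton]
          exact Submodule.mem_span_singleton_self v
        have h1 := hφ1 ⟨v, hvmem⟩
        rw [LinearPMap.mkSpanSingleton'_apply_self] at h1
        exact h1
  -- the sequence is Cauchy
  have hKey : ∀ p : Seminorm ℝ E, Continuous p → ∀ r : ℝ, 0 < r →
      ∀ᶠ q : ℕ × ℕ in atTop, p (y q.2 - y q.1) < r := by
    intro p hp r hr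
    obtain ⟨I, hI, hIest⟩ := hMain p hp
    have hev : ∀ᶠ k in atTop, I k < r / 2 :=
      Filter.Tendsto.eventually_lt_const (by linarith) hI
    obtain ⟨N, hN⟩ := eventually_atTop.mp hev
    rw [eventually_atTop]
    refine ⟨(N, N), fun q hq => ?_⟩
    obtain ⟨φ, hφle, hφv⟩ := hHB p (y q.2 - y q.1)
    obtain ⟨hint, hest⟩ := hIest φ hφle
    have h1 := hest q.1
    have h2 := hest q.2
    have hval : p (y q.2 - y q.1) = φ (y q.2) - φ (y q.1) := by rw [← hφv, map_sub]
    have ha1 := abs_le.mp h1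
    have ha2 := abs_le.mp h2
    have hN1 := hN q.1 hq.1
    have hN2 := hN q.2 hq.2
    rw [hval]
    linarith
  have hCauchy : CauchySeq y := by
    rw [cauchySeq_iff_tendsto, uniformity_eq_comap_nhds_zero E, tendsto_comap_iff]
    have hbasis := (with_gaugeSeminormFamily (𝕜 := ℝ) (E := E)).hasBasis_zero_ball
    rw [hbasis.tendsto_right_iff]
    rintro ⟨s, r⟩ hr
    have hone : ∀ i ∈ s, ∀ᶠ q : ℕ × ℕ in atTop,
        gaugeSeminormFamily ℝ E i (y q.2 - y q.1) < r := fun i _ =>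
      hKey (gaugeSeminormFamily ℝ E i)
        ((with_gaugeSeminormFamily (𝕜 := ℝ) (E := E)).continuous_seminorm i) r hr
    refine ((eventually_all_finset s).mpr hone).mono fun q hq => ?_
    show y q.2 - y q.1 ∈ (s.sup (gaugeSeminormFamily ℝ E)).ball 0 r
    rw [Seminorm.mem_ball_zero]
    exact Seminorm.finset_sup_apply_lt hr fun i hi => hq i hi
  obtain ⟨yL, hyL⟩ := hEsc y hCauchy
  -- conclusion
  have hfinal : ∀ e' : E →L[ℝ] ℝ,
      Integrable (fun x => e' (f x) * hermiteFunD n x) ∧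
      e' yL = ∫ x : Fin d → ℝ, e' (f x) * hermiteFunD n x := by
    intro e'
    set p : Seminorm ℝ E := (normSeminorm ℝ ℝ).comp e'.toLinearMap with hpdef
    have hpeq : ∀ u, p u = |e' u| := fun u => by
      rw [hpdef, Seminorm.comp_apply, coe_normSeminorm, Real.norm_eq_abs,
        ContinuousLinearMap.coe_coe]
    have hpc : Continuous p := by
      have h1 : Continuous fun u : E => |e' u| := continuous_abs.comp e'.continuous
      exact h1.congr fun u => (hpeq u).symm
    obtain ⟨I, hI, hIest⟩ := hMain p hpc
    obtain ⟨hint, hest⟩ := hIest e'.toLinearMap (fun u => by rw [hpeq u, ContinuousLinearMap.coe_coe])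
    have hGfun : (fun x => e'.toLinearMap (G x)) = fun x => e' (f x) * hermiteFunD n x := by
      funext x
      simp only [hGdef, ContinuousLinearMap.coe_coe, _root_.map_smul, smul_eq_mul]
      ring
    constructor
    · rw [← hGfun]; exact hint
    · have hlim1 : Tendsto (fun k => e' (y k)) atTop (𝓝 (e' yL)) :=
        (e'.continuous.tendsto yL).comp hyL
      have hlim2 : Tendsto (fun k => e' (y k)) atTop
          (𝓝 (∫ x, e'.toLinearMap (G x))) := by
        rw [tendsto_iff_dist_tendsto_zero]
        refine squeeze_zero (fun k => dist_nonneg) (fun k => ?_) hI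
        rw [Real.dist_eq]
        exact hest k
      rw [hGfun] at hlim2
      exact tendsto_nhds_unique hlim1 hlim2
  exact ⟨yL, fun e' => (hfinal e').1, fun e' => (hfinal e').2⟩
end

section
/- Let E be a locally convex Hausdorff space with the metric convex compactness property, and let 𝒯 = (tₙ)_{n∈ℕ₀} be a dense sequence in [a,b] with t₀ = a, t₁ = b, and pairwise distinct terms. Define the Schauder hat functions φₙ^𝒯 and the coefficient maps λ₀^E(f) = f(t₀), λ₁^E(f) = f(t₁), λ_{n+1}^E(f) = f(t_{n+1}) − Σ_{k=0}^{n} λ_k^E(f) φ_k^𝒯(t_{n+1}) for n ≥ 1. Then every f ∈ C([a,b], E) satisfies f = Σ_{n=0}^{∞} λₙ^E(f) φₙ^𝒯 with uniform convergence on [a,b]. -/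
open Filter Topology Pointwise

/-- The Schauder hat functions `φₙ^𝒯` for a sequence `𝒯 = (tₙ)` in `[a,b]` with `t₀ = a`,
`t₁ = b`: `φ₀` and `φ₁` are the two affine hat functions of the partition `(a,b)`, and for
`n ≥ 2`, `φₙ` is the piecewise linear hat function which is `1` at `tₙ`, `0` at the left and
right neighbours of `tₙ` among `t₀,…,t_{n-1}`, affine in between and `0` elsewhere. -/
noncomputable def schauderHat (t : ℕ → ℝ) (a b : ℝ) : ℕ → ℝ → ℝ
  | 0 => fun x => if a ≤ x ∧ x ≤ b then (b - x) / (b - a) else 0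
  | 1 => fun x => if a ≤ x ∧ x ≤ b then (x - a) / (b - a) else 0
  | n + 2 => fun x =>
      let tn := t (n + 2)
      let l := sSup {y : ℝ | (∃ j < n + 2, t j = y) ∧ y < tn}
      let r := sInf {y : ℝ | (∃ j < n + 2, t j = y) ∧ tn < y}
      if l ≤ x ∧ x ≤ tn then (x - l) / (tn - l)
      else if tn < x ∧ x ≤ r then (r - x) / (r - tn)
      else 0

/-- The coefficient maps `λₙᴱ` of the Faber–Schauder expansion:
`λ₀ᴱ(f) = f(t₀)`, `λ₁ᴱ(f) = f(t₁)` and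
`λ_{n+1}ᴱ(f) = f(t_{n+1}) − Σ_{k≤n} λ_kᴱ(f) φ_k^𝒯(t_{n+1})`. -/
noncomputable def schauderCoef {E : Type*} [AddCommGroup E] [Module ℝ E]
    (t : ℕ → ℝ) (a b : ℝ) (f : ℝ → E) : ℕ → E
  | 0 => f (t 0)
  | 1 => f (t 1)
  | n + 2 => f (t (n + 2)) - ∑ k ∈ (Finset.range (n + 2)).attach,
      schauderHat t a b k.1 (t (n + 2)) • schauderCoef t a b f k.1
  decreasing_by exact Finset.mem_range.mp k.2

/-- `E` has the *metric convex compactness property*: the closed absolutely convex hull of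
every metrisable compact subset of `E` is compact. -/
def MetricCCP (E : Type*) [AddCommGroup E] [Module ℝ E] [UniformSpace E] : Prop :=
  ∀ K : Set E, IsCompact K → TopologicalSpace.MetrizableSpace K →
    IsCompact (closure (convexHull ℝ (balancedHull ℝ K)))


/-! ### Auxiliary definitions and lemmas -/

/-- Partial sums of the Faber–Schauder expansion. -/
noncomputable def sPartial {E : Type*} [AddCommGroup E] [Module ℝ E]
    (t : ℕ → ℝ) (a b : ℝ) (f : ℝ → E) (N : ℕ) (x : ℝ) : E :=
  ∑ n ∈ Finset.range N, schauderHat t a b n x • schauderCoef t a b f n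

/-- Left neighbour of `t N` among the earlier nodes. -/
noncomputable def hatl (t : ℕ → ℝ) (N : ℕ) : ℝ :=
  sSup {y : ℝ | (∃ j < N, t j = y) ∧ y < t N}

/-- Right neighbour of `t N` among the earlier nodes. -/
noncomputable def hatr (t : ℕ → ℝ) (N : ℕ) : ℝ :=
  sInf {y : ℝ | (∃ j < N, t j = y) ∧ t N < y}

lemma schauderHat_two_eq (t : ℕ → ℝ) (a b : ℝ) (m : ℕ) (x : ℝ) :
    schauderHat t a b (m + 2) x =
      if hatl t (m + 2) ≤ x ∧ x ≤ t (m + 2) then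
        (x - hatl t (m + 2)) / (t (m + 2) - hatl t (m + 2))
      else if t (m + 2) < x ∧ x ≤ hatr t (m + 2) then
        (hatr t (m + 2) - x) / (hatr t (m + 2) - t (m + 2))
      else 0 := rfl

lemma schauderCoef_zero {E : Type*} [AddCommGroup E] [Module ℝ E]
    (t : ℕ → ℝ) (a b : ℝ) (f : ℝ → E) : schauderCoef t a b f 0 = f (t 0) := by
  rw [schauderCoef]

lemma schauderCoef_one {E : Type*} [AddCommGroup E] [Module ℝ E]
    (t : ℕ → ℝ) (a b : ℝ) (f : ℝ → E) : schauderCoef t a b f 1 = f (t 1) := by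
  rw [schauderCoef]

lemma schauderCoef_two {E : Type*} [AddCommGroup E] [Module ℝ E]
    (t : ℕ → ℝ) (a b : ℝ) (f : ℝ → E) (m : ℕ) :
    schauderCoef t a b f (m + 2) = f (t (m + 2)) - sPartial t a b f (m + 2) (t (m + 2)) := by
  rw [schauderCoef, Finset.sum_attach (Finset.range (m + 2))
    (fun k => schauderHat t a b k (t (m + 2)) • schauderCoef t a b f k)]
  rfl

section Facts

variable {t : ℕ → ℝ} {a b : ℝ}

lemma node_finite (N : ℕ) (P : ℝ → Prop) :
    Set.Finite {y : ℝ | (∃ j < N, t j = y) ∧ P y} :=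
  ((Set.finite_Iio N).image t).subset (by rintro y ⟨⟨j, hj, rfl⟩, -⟩; exact ⟨j, hj, rfl⟩)

lemma node_interior (hab : a < b) (ht0 : t 0 = a) (ht1 : t 1 = b)
    (htmem : ∀ n, t n ∈ Set.Icc a b) (htinj : Function.Injective t)
    {n : ℕ} (hn : 2 ≤ n) : a < t n ∧ t n < b := by
  have h := htmem n
  constructor
  · rcases eq_or_lt_of_le h.1 with h' | h'
    · exact absurd (htinj (ht0.trans h')) (by omega)
    · exact h'
  · rcases eq_or_lt_of_le h.2 with h' | h'
    · exact absurd (htinj (h'.trans ht1.symm)) (by omega)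
    · exact h'

lemma hatl_spec (hab : a < b) (ht0 : t 0 = a) (ht1 : t 1 = b)
    (htmem : ∀ n, t n ∈ Set.Icc a b) (htinj : Function.Injective t) (m : ℕ) :
    (∃ j < m + 2, t j = hatl t (m + 2)) ∧ hatl t (m + 2) < t (m + 2) ∧
      ∀ j < m + 2, t j < t (m + 2) → t j ≤ hatl t (m + 2) := by
  have hT := node_interior hab ht0 ht1 htmem htinj (n := m + 2) (by omega)
  have hfin := node_finite (t := t) (m + 2) (fun y => y < t (m + 2))
  have hne : {y : ℝ | (∃ j < m + 2, t j = y) ∧ y < t (m + 2)}.Nonempty :=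
    ⟨a, ⟨0, by omega, ht0⟩, hT.1⟩
  have hmem := hne.csSup_mem hfin
  exact ⟨hmem.1, hmem.2, fun j hj hjT => le_csSup hfin.bddAbove ⟨⟨j, hj, rfl⟩, hjT⟩⟩

lemma hatr_spec (hab : a < b) (ht0 : t 0 = a) (ht1 : t 1 = b)
    (htmem : ∀ n, t n ∈ Set.Icc a b) (htinj : Function.Injective t) (m : ℕ) :
    (∃ j < m + 2, t j = hatr t (m + 2)) ∧ t (m + 2) < hatr t (m + 2) ∧
      ∀ j < m + 2, t (m + 2) < t j → hatr t (m + 2) ≤ t j := by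
  have hT := node_interior hab ht0 ht1 htmem htinj (n := m + 2) (by omega)
  have hfin := node_finite (t := t) (m + 2) (fun y => t (m + 2) < y)
  have hne : {y : ℝ | (∃ j < m + 2, t j = y) ∧ t (m + 2) < y}.Nonempty :=
    ⟨b, ⟨1, by omega, ht1⟩, hT.2⟩
  have hmem := hne.csInf_mem hfin
  exact ⟨hmem.1, hmem.2, fun j hj hjT => csInf_le hfin.bddBelow ⟨⟨j, hj, rfl⟩, hjT⟩⟩

/-- **Key invariant**: the partial sum of the Faber–Schauder series is the piecewise-linear
interpolation of `f` at the nodes `t 0, …, t (N-1)`. -/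
lemma sPartial_eq_interp {E : Type*} [AddCommGroup E] [Module ℝ E]
    (hab : a < b) (ht0 : t 0 = a) (ht1 : t 1 = b)
    (htmem : ∀ n, t n ∈ Set.Icc a b) (htinj : Function.Injective t) (f : ℝ → E) :
    ∀ N, 2 ≤ N → ∀ x ∈ Set.Icc a b, ∀ p q : ℝ,
      (∃ j < N, t j = p) → (∃ j < N, t j = q) → p ≤ x → x ≤ q →
      (∀ j < N, t j ≤ p ∨ q ≤ t j) →
      sPartial t a b f N x = f p + ((x - p) / (q - p)) • (f q - f p) := by
  have hba : b - a ≠ 0 := sub_ne_zero.mpr hab.ne'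
  intro N hN
  induction N, hN using Nat.le_induction with
  | base =>
    intro x hx p q hp hq hpx hxq _
    have hS : sPartial t a b f 2 x = ((b - x) / (b - a)) • f a + ((x - a) / (b - a)) • f b := by
      rw [sPartial, Finset.sum_range_succ, Finset.sum_range_one, schauderCoef_zero,
        schauderCoef_one, ht0, ht1]
      simp [schauderHat, hx.1, hx.2]
    obtain ⟨jp, hjp, rfl⟩ := hp
    obtain ⟨jq, hjq, rfl⟩ := hq
    interval_cases jp <;> interval_cases jq <;> rw [ht0] at * <;> rw [ht1] at * <;> rw [hS]
    · have hxa : x = a := le_antisymm hxq hpx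
      subst hxa
      simp [div_self hba]
    · rw [smul_sub]
      match_scalars <;> field_simp <;> ring
    · exact absurd (hpx.trans hxq) (not_le.mpr hab)
    · have hxb : x = b := le_antisymm hxq hpx
      subst hxb
      simp [div_self hba]
  | succ N hN2 ih =>
    intro x hx p q hp hq hpx hxq hvalid
    obtain ⟨m, rfl⟩ : ∃ m, N = m + 2 := ⟨N - 2, by omega⟩
    set T := t (m + 2) with hT
    obtain ⟨hlmem, hlT, hlmax⟩ := hatl_spec hab ht0 ht1 htmem htinj m
    obtain ⟨hrmem, hTr, hrmin⟩ := hatr_spec hab ht0 ht1 htmem htinj m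
    set l := hatl t (m + 2) with hl
    set r := hatr t (m + 2) with hr
    have hTmem := node_interior hab ht0 ht1 htmem htinj (n := m + 2) (by omega)
    have hTlne : T - l ≠ 0 := sub_ne_zero.mpr hlT.ne'
    have hrTne : r - T ≠ 0 := sub_ne_zero.mpr hTr.ne'
    have hrlne : r - l ≠ 0 := sub_ne_zero.mpr (hlT.trans hTr).ne'
    have hnoNode : ∀ j < m + 2, t j ≤ l ∨ r ≤ t j := by
      intro j hj
      rcases lt_trichotomy (t j) T with h | h | h
      · exact Or.inl (hlmax j hj h)
      · exact absurd (htinj h) (by omega)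
      · exact Or.inr (hrmin j hj h)
    have hstep : ∀ y : ℝ, sPartial t a b f (m + 3) y =
        sPartial t a b f (m + 2) y + schauderHat t a b (m + 2) y • schauderCoef t a b f (m + 2) := by
      intro y
      rw [sPartial, sPartial, Finset.sum_range_succ]
    have hTIcc : T ∈ Set.Icc a b := htmem (m + 2)
    have hST : sPartial t a b f (m + 2) T = f l + ((T - l) / (r - l)) • (f r - f l) :=
      ih T hTIcc l r hlmem hrmem hlT.le hTr.le hnoNode
    have hcoef : schauderCoef t a b f (m + 2) = f T - (f l + ((T - l) / (r - l)) • (f r - f l)) := by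
      rw [schauderCoef_two, ← hT, hST]
    by_cases hql : q ≤ l
    · -- x left of the new hat's support
      have hxl : x ≤ x := le_refl x
      have hφ : schauderHat t a b (m + 2) x = 0 := by
        rw [schauderHat_two_eq, ← hl, ← hr, ← hT]
        split_ifs with h1 h2
        · have : x = l := le_antisymm (hxq.trans hql) h1.1
          rw [this, sub_self, zero_div]
        · exact absurd h2.1 (not_lt.mpr ((hxq.trans hql).trans hlT.le))
        · rfl
      obtain ⟨jp, hjp, rfl⟩ := hp
      obtain ⟨jq, hjq, rfl⟩ := hq
      have hjq' : jq ≠ m + 2 := by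
        rintro rfl
        exact absurd hql (not_le.mpr hlT)
      have hjp' : jp ≠ m + 2 := by
        rintro rfl
        exact absurd ((hpx.trans hxq).trans hql) (not_le.mpr hlT)
      rw [hstep, hφ, zero_smul, add_zero]
      exact ih x hx _ _ ⟨jp, by omega, rfl⟩ ⟨jq, by omega, rfl⟩ hpx hxq
        (fun j hj => hvalid j (by omega))
    · by_cases hpr : r ≤ p
      · -- x right of the new hat's support
        have hrx : r ≤ x := hpr.trans hpx
        have hφ : schauderHat t a b (m + 2) x = 0 := by
          rw [schauderHat_two_eq, ← hl, ← hr, ← hT]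
          split_ifs with h1 h2
          · exact absurd h1.2 (not_le.mpr (lt_of_lt_of_le hTr hrx))
          · have : x = r := le_antisymm h2.2 hrx
            rw [this, sub_self, zero_div]
          · rfl
        obtain ⟨jp, hjp, rfl⟩ := hp
        obtain ⟨jq, hjq, rfl⟩ := hq
        have hjp' : jp ≠ m + 2 := by
          rintro rfl
          exact absurd hpr (not_le.mpr hTr)
        have hjq' : jq ≠ m + 2 := by
          rintro rfl
          exact absurd (hpr.trans (hpx.trans hxq)) (not_le.mpr hTr)
        rw [hstep, hφ, zero_smul, add_zero]
        exact ih x hx _ _ ⟨jp, by omega, rfl⟩ ⟨jq, by omega, rfl⟩ hpx hxq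
          (fun j hj => hvalid j (by omega))
      · push_neg at hql hpr
        -- now l < q and p < r ; deduce l ≤ p ≤ x ≤ q ≤ r
        obtain ⟨jl, hjl, hjl'⟩ := hlmem
        obtain ⟨jr, hjr, hjr'⟩ := hrmem
        have hlp : l ≤ p := by
          by_contra h
          push_neg at h
          rcases hvalid jl (by omega) with h' | h' <;> rw [hjl'] at h'
          · exact absurd h' (not_le.mpr h)
          · exact absurd h' (not_le.mpr hql)
        have hqr : q ≤ r := by
          by_contra h
          push_neg at h
          rcases hvalid jr (by omega) with h' | h' <;> rw [hjr'] at h'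
          · exact absurd h' (not_le.mpr hpr)
          · exact absurd h' (not_le.mpr h)
        have hp' : p = l ∨ p = T := by
          obtain ⟨jp, hjp, rfl⟩ := hp
          rcases Nat.lt_succ_iff_lt_or_eq.mp hjp with h | h
          · rcases hnoNode jp h with h' | h'
            · exact Or.inl (le_antisymm h' hlp)
            · exact absurd h' (not_le.mpr hpr)
          · exact Or.inr (by rw [h])
        have hq' : q = T ∨ q = r := by
          obtain ⟨jq, hjq, rfl⟩ := hq
          rcases Nat.lt_succ_iff_lt_or_eq.mp hjq with h | h
          · rcases hnoNode jq h with h' | h'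
            · exact absurd h' (not_le.mpr hql)
            · exact Or.inr (le_antisymm hqr h')
          · exact Or.inl (by rw [h])
        rcases hp' with rfl | rfl
        · rcases hq' with rfl | rfl
          · -- p = l, q = T
            have hxT : x ≤ T := hxq
            have hφ : schauderHat t a b (m + 2) x = (x - l) / (T - l) := by
              rw [schauderHat_two_eq, ← hl, ← hr, ← hT, if_pos ⟨hpx, hxT⟩]
            have hSx : sPartial t a b f (m + 2) x = f l + ((x - l) / (r - l)) • (f r - f l) :=
              ih x hx l r ⟨jl, by omega, hjl'⟩ ⟨jr, by omega, hjr'⟩ hpx (hxT.trans hTr.le) hnoNode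
            rw [hstep, hφ, hcoef, hSx]
            match_scalars <;> field_simp <;> ring
          · -- p = l, q = r : contradiction, T lies strictly between
            rcases hvalid (m + 2) (by omega) with h' | h'
            · exact absurd h' (not_le.mpr hlT)
            · exact absurd h' (not_le.mpr hTr)
        · rcases hq' with rfl | rfl
          · -- p = T, q = T
            have hxT : x = T := le_antisymm hxq hpx
            have hφ : schauderHat t a b (m + 2) x = 1 := by
              rw [schauderHat_two_eq, ← hl, ← hr, ← hT,
                if_pos ⟨by rw [hxT]; exact hlT.le, hxT.le⟩, hxT, div_self hTlne]
            rw [hstep, hφ, hcoef, one_smul, hxT, hST]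
            simp [sub_self]
          · -- p = T, q = r
            have hTx : T ≤ x := hpx
            have hφ : schauderHat t a b (m + 2) x = (r - x) / (r - T) := by
              rw [schauderHat_two_eq, ← hl, ← hr, ← hT]
              rcases eq_or_lt_of_le hTx with h | h
              · rw [if_pos ⟨hlT.le.trans hTx, h.ge⟩, ← h, div_self hTlne, div_self hrTne]
              · rw [if_neg (fun hc => absurd hc.2 (not_le.mpr h)), if_pos ⟨h, hxq⟩]
            have hSx : sPartial t a b f (m + 2) x = f l + ((x - l) / (r - l)) • (f r - f l) :=
              ih x hx l r ⟨jl, by omega, hjl'⟩ ⟨jr, by omega, hjr'⟩ (hlT.le.trans hTx) hxq hnoNode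
            rw [hstep, hφ, hcoef, hSx]
            match_scalars <;> field_simp <;> ring

end Facts

/-- Let `E` be a locally convex Hausdorff space with the metric convex
compactness property and `𝒯 = (tₙ)` a dense sequence in `[a,b]` with `t₀ = a`, `t₁ = b` and
pairwise distinct terms.  Then every `f ∈ C([a,b], E)` satisfies
`f = Σₙ λₙᴱ(f) φₙ^𝒯` with uniform convergence on `[a,b]`. -/
theorem stmt18 {E : Type*}
    [AddCommGroup E] [Module ℝ E] [UniformSpace E] [IsUniformAddGroup E]
    [ContinuousSMul ℝ E] [T2Space E] [LocallyConvexSpace ℝ E]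
    (hccp : MetricCCP E)
    (a b : ℝ) (hab : a < b)
    (t : ℕ → ℝ) (ht0 : t 0 = a) (ht1 : t 1 = b)
    (htmem : ∀ n, t n ∈ Set.Icc a b) (htinj : Function.Injective t)
    (htdense : Set.Icc a b ⊆ closure (Set.range t))
    (f : ℝ → E) (hf : ContinuousOn f (Set.Icc a b)) :
    TendstoUniformlyOn
      (fun (k : ℕ) (x : ℝ) => ∑ n ∈ Finset.range k,
        schauderHat t a b n x • schauderCoef t a b f n)
      f atTop (Set.Icc a b) := by
  intro u hu
  rw [uniformity_eq_comap_nhds_zero E] at hu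
  obtain ⟨V, hV, hVu⟩ := Filter.mem_comap.mp hu
  obtain ⟨W, ⟨hW, hWconv⟩, hWV⟩ := (LocallyConvexSpace.convex_basis_zero ℝ E).mem_iff.mp hV
  -- uniform continuity of `f` on `[a,b]` with respect to `W`
  obtain ⟨δ, hδ, hUC⟩ : ∃ δ > 0, ∀ y ∈ Set.Icc a b, ∀ z ∈ Set.Icc a b,
      |y - z| < δ → f z - f y ∈ W := by
    have h1 : {p : E × E | p.2 - p.1 ∈ W} ∈ uniformity E := by
      rw [uniformity_eq_comap_nhds_zero E]
      exact Filter.preimage_mem_comap hW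
    have h2 := isCompact_Icc.uniformContinuousOn_of_continuous hf h1
    rw [Filter.mem_map, Filter.mem_inf_principal] at h2
    rw [Metric.mem_uniformity_dist] at h2
    obtain ⟨δ, hδ, h3⟩ := h2
    exact ⟨δ, hδ, fun y hy z hz hyz =>
      h3 (show dist y z < δ by rwa [Real.dist_eq]) ⟨hy, hz⟩⟩
  -- a δ/4-net among the nodes
  obtain ⟨N0, hN0⟩ : ∃ N0, ∀ x ∈ Set.Icc a b, ∃ j < N0, |x - t j| < δ / 4 := by
    have hcover : Set.Icc a b ⊆ ⋃ j : ℕ, Metric.ball (t j) (δ / 4) := by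
      intro x hx
      have hx' := htdense hx
      rw [Metric.mem_closure_iff] at hx'
      obtain ⟨y, ⟨j, rfl⟩, hy⟩ := hx' (δ / 4) (by positivity)
      exact Set.mem_iUnion.mpr ⟨j, by rwa [Metric.mem_ball]⟩
    obtain ⟨s, hs⟩ := isCompact_Icc.elim_finite_subcover
      (fun j : ℕ => Metric.ball (t j) (δ / 4)) (fun j => Metric.isOpen_ball) hcover
    refine ⟨s.sup id + 1, fun x hx => ?_⟩
    obtain ⟨j, hjs, hj⟩ := Set.mem_iUnion₂.mp (hs hx)
    refine ⟨j, ?_, by rwa [Metric.mem_ball, Real.dist_eq] at hj⟩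
    have : j ≤ s.sup id := Finset.le_sup (f := id) hjs
    omega
  filter_upwards [eventually_ge_atTop (max N0 2)] with k hk x hx
  have hk2 : 2 ≤ k := le_trans (le_max_right _ _) hk
  have hkN0 : N0 ≤ k := le_trans (le_max_left _ _) hk
  -- the bracketing nodes of `x` among `t 0, …, t (k-1)`
  have hfinL := node_finite (t := t) k (fun y => y ≤ x)
  have hfinR := node_finite (t := t) k (fun y => x ≤ y)
  have hneL : {y : ℝ | (∃ j < k, t j = y) ∧ y ≤ x}.Nonempty :=
    ⟨a, ⟨0, by omega, ht0⟩, hx.1⟩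
  have hneR : {y : ℝ | (∃ j < k, t j = y) ∧ x ≤ y}.Nonempty :=
    ⟨b, ⟨1, by omega, ht1⟩, hx.2⟩
  set L := sSup {y : ℝ | (∃ j < k, t j = y) ∧ y ≤ x} with hLdef
  set R := sInf {y : ℝ | (∃ j < k, t j = y) ∧ x ≤ y} with hRdef
  have hLmem := hneL.csSup_mem hfinL
  have hRmem := hneR.csInf_mem hfinR
  rw [← hLdef] at hLmem
  rw [← hRdef] at hRmem
  have hLx : L ≤ x := hLmem.2
  have hxR : x ≤ R := hRmem.2
  have hLmax : ∀ j < k, t j ≤ x → t j ≤ L :=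
    fun j hj hjx => le_csSup hfinL.bddAbove ⟨⟨j, hj, rfl⟩, hjx⟩
  have hRmin : ∀ j < k, x ≤ t j → R ≤ t j :=
    fun j hj hjx => csInf_le hfinR.bddBelow ⟨⟨j, hj, rfl⟩, hjx⟩
  obtain ⟨jL, hjL, hjL'⟩ := hLmem.1
  obtain ⟨jR, hjR, hjR'⟩ := hRmem.1
  have hLIcc : L ∈ Set.Icc a b := hjL' ▸ htmem jL
  have hRIcc : R ∈ Set.Icc a b := hjR' ▸ htmem jR
  -- the gaps `x - L` and `R - x` are both `< δ/2`
  have hxL : x - L < δ / 2 := by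
    by_contra h
    push_neg at h
    have hmIcc : x - δ / 4 ∈ Set.Icc a b :=
      ⟨le_trans hLIcc.1 (by linarith), le_trans (by linarith) hx.2⟩
    obtain ⟨j, hj, hj'⟩ := hN0 _ hmIcc
    rw [abs_lt] at hj'
    have h1 : t j ≤ x := by linarith [hj'.1]
    have := hLmax j (by omega) h1
    linarith [hj'.2]
  have hRx : R - x < δ / 2 := by
    by_contra h
    push_neg at h
    have hmIcc : x + δ / 4 ∈ Set.Icc a b :=
      ⟨le_trans hx.1 (by linarith), le_trans (by linarith) hRIcc.2⟩
    obtain ⟨j, hj, hj'⟩ := hN0 _ hmIcc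
    rw [abs_lt] at hj'
    have h1 : x ≤ t j := by linarith [hj'.2]
    have := hRmin j (by omega) h1
    linarith [hj'.1]
  -- the partial sum is the convex interpolation between `f L` and `f R`
  have hS : sPartial t a b f k x = f L + ((x - L) / (R - L)) • (f R - f L) :=
    sPartial_eq_interp hab ht0 ht1 htmem htinj f k hk2 x hx L R
      ⟨jL, hjL, hjL'⟩ ⟨jR, hjR, hjR'⟩ hLx hxR
      (fun j hj => (le_total (t j) x).imp (hLmax j hj) (hRmin j hj))
  set s := (x - L) / (R - L) with hsdef
  have hs0 : 0 ≤ s := by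
    rcases eq_or_lt_of_le (hLx.trans hxR) with h | h
    · have : x - L = 0 := by linarith [hLx, hxR, h.le, h.ge]
      rw [hsdef, this, zero_div]
    · exact div_nonneg (by linarith) (by linarith)
  have hs1 : s ≤ 1 := by
    rcases eq_or_lt_of_le (hLx.trans hxR) with h | h
    · have : x - L = 0 := by linarith [hLx, hxR, h.le, h.ge]
      rw [hsdef, this, zero_div]; norm_num
    · rw [hsdef, div_le_one (by linarith)]; linarith
  have hfL : f L - f x ∈ W := hUC x hx L hLIcc (by rw [abs_of_nonneg (by linarith)]; linarith)
  have hfR : f R - f x ∈ W := hUC x hx R hRIcc (by rw [abs_of_nonpos (by linarith)]; linarith)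
  have hmemW : sPartial t a b f k x - f x ∈ W := by
    have hrw : sPartial t a b f k x - f x = (1 - s) • (f L - f x) + s • (f R - f x) := by
      rw [hS]; module
    rw [hrw]
    exact hWconv hfL hfR (by linarith) hs0 (by ring)
  exact hVu (hWV hmemW)
end
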